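/- arXiv:1803.09267 — 6 statements merged into one kernel-verified Lean document; each statement's English description precedes it below -/
import Mathlib

section
/- Let k be a field, A a finite-dimensional unital associative k-algebra with dim_k A = n, λ : A → k a symmetric Frobenius form, and (e_i)_{i∈Fin n}, (f_i)_{i∈Fin n} λ-dual bases of A. Let d be a natural number, write A^d for Fin d → A, let M be a d×d matrix with entries in A, and let ψ : A^d → A^d be the k-linear (and right A-linear) map ψ(v) j = Σ_{m∈Fin d} (M j m)·(v m). Then for every k-linear endomorphism φ : A^d → A^d, the trace of φ ∘ ψ as a k-linear map equals λ( Σ_{j,m∈Fin d} ( Σ_{i∈Fin n} (φ(Pi.single m e_i)) j · f_i ) · (M m j) ). -/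
/-- Let `k` be a field, `A` a finite-dimensional unital associative
`k`-algebra with `dim_k A = n`, `lam` a symmetric Frobenius form on `A`, and
`(e i)`, `(f i)` `lam`-dual bases of `A`. Let `d : ℕ`, `M` a `d × d` matrix over `A`,
and `ψ : A^d → A^d` the `k`-linear (and right `A`-linear) map `ψ v j = ∑ m, M j m * v m`.
Then for every `k`-linear endomorphism `φ : A^d → A^d`, the trace of `φ ∘ ψ` as a
`k`-linear map equals
`lam (∑ j, ∑ m, (∑ i, (φ (Pi.single m (e i))) j * f i) * M m j)`. -/
theorem stmt2 (k : Type*) [Field k] (A : Type*) [Ring A] [Algebra k A]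
    [FiniteDimensional k A] (n : ℕ) (hn : Module.finrank k A = n)
    (lam : A →ₗ[k] k)
    (hnondeg : ∀ a : A, (∀ b : A, lam (a * b) = 0) → a = 0)
    (hsymm : ∀ a b : A, lam (a * b) = lam (b * a))
    (e : Module.Basis (Fin n) k A) (f : Fin n → A)
    (hdual : ∀ i j : Fin n, lam (e i * f j) = if i = j then 1 else 0)
    (d : ℕ) (M : Matrix (Fin d) (Fin d) A)
    (ψ : (Fin d → A) →ₗ[k] (Fin d → A))
    (hψ : ∀ (v : Fin d → A) (j : Fin d), ψ v j = ∑ m : Fin d, M j m * v m)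
    (φ : (Fin d → A) →ₗ[k] (Fin d → A)) :
    LinearMap.trace k (Fin d → A) (φ ∘ₗ ψ) =
      lam (∑ j : Fin d, ∑ m : Fin d,
        (∑ i : Fin n, φ (Pi.single m (e i)) j * f i) * M m j) := by
  classical
  have hrepr : ∀ (a : A) (i : Fin n), e.repr a i = lam (a * f i) := by
    intro a i
    conv_rhs => rw [← e.sum_repr a]
    rw [Finset.sum_mul, map_sum]
    simp [smul_mul_assoc, hdual, smul_eq_mul]
  have hcomm : φ ∘ₗ ψ = φ * ψ := rfl
  rw [hcomm, LinearMap.trace_mul_comm]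
  set B : Module.Basis (Σ _ : Fin d, Fin n) k (Fin d → A) := Pi.basis (fun _ => e) with hB
  rw [LinearMap.trace_eq_matrix_trace k B, Matrix.trace]
  have hBapp : ∀ (m : Fin d) (i : Fin n), B ⟨m, i⟩ = Pi.single m (e i) := by
    intro m i; ext j; simp [hB, Pi.basis_apply]
  simp only [Matrix.diag_apply, LinearMap.toMatrix_apply]
  rw [← Finset.univ_sigma_univ, Finset.sum_sigma]
  calc ∑ m : Fin d, ∑ i : Fin n, B.repr ((ψ * φ) (B ⟨m, i⟩)) ⟨m, i⟩
      = ∑ m : Fin d, ∑ i : Fin n, ∑ j : Fin d,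
          lam ((φ (Pi.single m (e i)) j * f i) * M m j) := by
        refine Finset.sum_congr rfl fun m _ => Finset.sum_congr rfl fun i _ => ?_
        rw [hBapp]
        have : B.repr ((ψ * φ) (Pi.single m (e i))) ⟨m, i⟩
            = e.repr (((ψ * φ) (Pi.single m (e i))) m) i := by
          simp [hB, Pi.basis_repr]
        rw [this, hrepr, Module.End.mul_apply, hψ, Finset.sum_mul, map_sum]
        refine Finset.sum_congr rfl fun j _ => ?_
        rw [mul_assoc, hsymm]
    _ = lam (∑ j : Fin d, ∑ m : Fin d,
          (∑ i : Fin n, φ (Pi.single m (e i)) j * f i) * M m j) := by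
        simp only [map_sum, Finset.sum_mul]
        refine Eq.trans (Finset.sum_congr rfl fun m _ => Finset.sum_comm) ?_
        exact Finset.sum_comm
end

section
/- Let k be a field, A a finite-dimensional unital associative k-algebra with dim_k A = n, and let λ₁ and λ₂ be two Frobenius forms on A, with λ₁-dual bases (e_i), (f_i) and λ₂-dual bases (e'_i), (f'_i). Then the two-sided ideal of the k-algebra A ⊗_k A (with multiplication (a⊗b)(a'⊗b') = aa' ⊗ bb') generated by the element Σ_{i∈Fin n} e_i ⊗ f_i equals the two-sided ideal generated by Σ_{i∈Fin n} e'_i ⊗ f'_i; that is, the two-sided ideal generated by the canonical element of a Frobenius form is independent of the choice of Frobenius form and dual bases. -/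
open TensorProduct

section Aux
variable {k A : Type*} [Field k] [Ring A] [Algebra k A] [FiniteDimensional k A] {n : ℕ}

/-- Coefficient formula: the `e`-coordinates of `b` are `lam (b * f j)`. -/
lemma coeffA (lam : A →ₗ[k] k) (e : Module.Basis (Fin n) k A) (f : Fin n → A)
    (hdual : ∀ i j : Fin n, lam (e i * f j) = if i = j then 1 else 0) (b : A) (j : Fin n) :
    lam (b * f j) = e.repr b j := by
  conv_lhs => rw [← e.sum_repr b]
  rw [Finset.sum_mul]
  simp only [smul_mul_assoc, map_sum, map_smul, hdual, smul_eq_mul, mul_ite, mul_one, mul_zero]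
  simp

lemma expandA (lam : A →ₗ[k] k) (e : Module.Basis (Fin n) k A) (f : Fin n → A)
    (hdual : ∀ i j : Fin n, lam (e i * f j) = if i = j then 1 else 0) (b : A) :
    b = ∑ j, lam (b * f j) • e j := by
  simp only [coeffA lam e f hdual b]
  exact (e.sum_repr b).symm

lemma expandB (hn : Module.finrank k A = n) (hn0 : 0 < n)
    (lam : A →ₗ[k] k) (e : Module.Basis (Fin n) k A) (f : Fin n → A)
    (hdual : ∀ i j : Fin n, lam (e i * f j) = if i = j then 1 else 0) (b : A) :
    b = ∑ j, lam (e j * b) • f j := by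
  have : Nonempty (Fin n) := ⟨⟨0, hn0⟩⟩
  have hli : LinearIndependent k f := by
    rw [Fintype.linearIndependent_iff]
    intro g hg i
    have := congrArg (fun x => lam (e i * x)) hg
    simp only [Finset.mul_sum, mul_smul_comm, map_sum, map_smul, hdual, smul_eq_mul,
      mul_ite, mul_one, mul_zero, map_zero] at this
    simpa using this
  let bf : Module.Basis (Fin n) k A := basisOfLinearIndependentOfCardEqFinrank hli (by simp [hn])
  have hbf : ⇑bf = f := coe_basisOfLinearIndependentOfCardEqFinrank hli (by simp [hn])
  have hco : ∀ j, lam (e j * b) = bf.repr b j := by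
    intro j
    conv_lhs => rw [← bf.sum_repr b]
    rw [Finset.mul_sum]
    simp only [hbf, mul_smul_comm, map_sum, map_smul, hdual, smul_eq_mul, mul_ite, mul_one,
      mul_zero]
    simp
  simp only [hco]
  conv_lhs => rw [← bf.sum_repr b]
  simp [hbf]

/-- One-sided containment; applied twice in the main theorem. -/
lemma span_le_span (hn : Module.finrank k A = n) (hn0 : 0 < n)
    (lam₁ lam₂ : A →ₗ[k] k)
    (e : Module.Basis (Fin n) k A) (f : Fin n → A)
    (hdual : ∀ i j : Fin n, lam₁ (e i * f j) = if i = j then 1 else 0)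
    (e' : Module.Basis (Fin n) k A) (f' : Fin n → A)
    (hdual' : ∀ i j : Fin n, lam₂ (e' i * f' j) = if i = j then 1 else 0) :
    TwoSidedIdeal.span {∑ i : Fin n, (e' i) ⊗ₜ[k] (f' i)} ≤
      TwoSidedIdeal.span {∑ i : Fin n, (e i) ⊗ₜ[k] (f i)} := by
  set u : A := ∑ j, lam₁ (e' j) • f' j with hu
  -- key: lam₂ (y * u) = lam₁ y
  have hkey : ∀ y : A, lam₂ (y * u) = lam₁ y := by
    intro y
    rw [hu, Finset.mul_sum]
    simp only [mul_smul_comm, map_sum, map_smul, smul_eq_mul]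
    conv_rhs => rw [expandA lam₂ e' f' hdual' y]
    simp only [map_sum, map_smul, smul_eq_mul]
    exact Finset.sum_congr rfl fun j _ => mul_comm _ _
  -- right multiplication by u equals the transfer operator
  have hT : ∀ x : A, x * u = ∑ j, lam₁ (e' j * x) • f' j := by
    intro x
    conv_lhs => rw [expandB hn hn0 lam₂ e' f' hdual' (x * u)]
    refine Finset.sum_congr rfl fun j _ => ?_
    rw [← mul_assoc, hkey]
  -- the canonical element identity
  have hc' : (∑ i : Fin n, (e' i) ⊗ₜ[k] (f' i)) =
      (∑ i : Fin n, (e i) ⊗ₜ[k] (f i)) * ((1 : A) ⊗ₜ[k] u) := by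
    rw [Finset.sum_mul]
    simp only [Algebra.TensorProduct.tmul_mul_tmul, mul_one]
    calc ∑ i : Fin n, (e' i) ⊗ₜ[k] (f' i)
        = ∑ i : Fin n, (∑ j, lam₁ (e' i * f j) • e j) ⊗ₜ[k] (f' i) := by
          refine Finset.sum_congr rfl fun i _ => ?_
          conv_lhs => rw [expandA lam₁ e f hdual (e' i)]
      _ = ∑ j : Fin n, (e j) ⊗ₜ[k] (∑ i, lam₁ (e' i * f j) • f' i) := by
          simp only [sum_tmul, tmul_sum, smul_tmul, tmul_smul]
          rw [Finset.sum_comm]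
      _ = ∑ j : Fin n, (e j) ⊗ₜ[k] (f j * u) := by
          refine Finset.sum_congr rfl fun j _ => ?_
          rw [hT (f j)]
  rw [hc']
  intro x hx
  rw [TwoSidedIdeal.mem_span_iff] at hx ⊢
  intro I hI
  refine hx I ?_
  intro y hy
  simp only [Set.mem_singleton_iff] at hy
  subst hy
  exact I.mul_mem_right _ _ (hI (Set.mem_singleton _))

end Aux

/-- A Frobenius form on a finite-dimensional unital associative `k`-algebra `A` is a
`k`-linear map `lam : A → k` such that the bilinear form `(a, b) ↦ lam (a * b)` is
nondegenerate. -/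
def IsFrobeniusForm {k A : Type*} [Field k] [Ring A] [Algebra k A]
    (lam : A →ₗ[k] k) : Prop :=
  ∀ a : A, (∀ b : A, lam (a * b) = 0) → a = 0

/-- Let `k` be a field, `A` a finite-dimensional unital associative
`k`-algebra with `dim_k A = n`, and let `lam₁`, `lam₂` be two Frobenius forms on `A`,
with `lam₁`-dual bases `(e i)`, `(f i)` and `lam₂`-dual bases `(e' i)`, `(f' i)`.
Then the two-sided ideal of the `k`-algebra `A ⊗[k] A` generated by `∑ i, e i ⊗ f i`
equals the two-sided ideal generated by `∑ i, e' i ⊗ f' i`. -/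
theorem stmt6 (k : Type*) [Field k] (A : Type*) [Ring A] [Algebra k A]
    [FiniteDimensional k A] (n : ℕ) (hn : Module.finrank k A = n)
    (lam₁ lam₂ : A →ₗ[k] k)
    (h₁ : IsFrobeniusForm lam₁) (h₂ : IsFrobeniusForm lam₂)
    (e : Module.Basis (Fin n) k A) (f : Fin n → A)
    (hdual : ∀ i j : Fin n, lam₁ (e i * f j) = if i = j then 1 else 0)
    (e' : Module.Basis (Fin n) k A) (f' : Fin n → A)
    (hdual' : ∀ i j : Fin n, lam₂ (e' i * f' j) = if i = j then 1 else 0) :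
    TwoSidedIdeal.span {∑ i : Fin n, (e i) ⊗ₜ[k] (f i)} =
      TwoSidedIdeal.span {∑ i : Fin n, (e' i) ⊗ₜ[k] (f' i)} := by
  rcases Nat.eq_zero_or_pos n with h0 | hn0
  · subst h0; simp
  · exact le_antisymm (span_le_span hn hn0 lam₂ lam₁ e' f' hdual' e f hdual)
      (span_le_span hn hn0 lam₁ lam₂ e f hdual e' f' hdual')
end

section
/- Let k be a field with more than two elements, let A be a finite-dimensional unital associative k-algebra, and let λ be a Frobenius form on A. Then either the structure map k → A is surjective (i.e. A = k, dim_k A = 1), or there exists a unit u of A with λ(u) = 0. -/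
open Polynomial

section Helpers

variable {k : Type*} [Field k]

/-- Factor out the largest power of `X`. -/
lemma exists_X_pow_mul : ∀ (n : ℕ) (p : k[X]), p ≠ 0 → p.natDegree ≤ n →
    ∃ (r : ℕ) (q : k[X]), p = X ^ r * q ∧ ¬ X ∣ q := by
  intro n
  induction n with
  | zero =>
    intro p hp hd
    refine ⟨0, p, by ring, fun hdvd => ?_⟩
    rw [X_dvd_iff] at hdvd
    have hC := Polynomial.eq_C_of_natDegree_le_zero hd
    rw [hdvd, map_zero] at hC
    exact hp hC
  | succ n ih =>
    intro p hp hd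
    by_cases hX : X ∣ p
    · obtain ⟨q', rfl⟩ := hX
      have hq' : q' ≠ 0 := right_ne_zero_of_mul hp
      have hdeg : q'.natDegree ≤ n := by
        have h1 : (X * q').natDegree = 1 + q'.natDegree := by
          rw [natDegree_mul X_ne_zero hq', natDegree_X]
        omega
      obtain ⟨r, q, hq, hnd⟩ := ih q' hq' hdeg
      exact ⟨r + 1, q, by rw [hq]; ring, hnd⟩
    · exact ⟨0, p, by ring, hX⟩

variable {B : Type*} [Ring B] [Algebra k B]

/-- For a non-unit `a` in a finite-dimensional algebra there is a nonzero idempotent `e`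
(a polynomial in `a`) such that `a + e` is a unit; if moreover `a` is not nilpotent
then `e ≠ 1`. -/
lemma exists_good_idem [FiniteDimensional k B] (a : B) (ha : ¬IsUnit a) :
    ∃ e : B, IsIdempotentElem e ∧ e ≠ 0 ∧ IsUnit (a + e) ∧ (¬ IsNilpotent a → e ≠ 1) := by
  have hint : IsIntegral k a := Algebra.IsIntegral.isIntegral a
  have hp0 : minpoly k a ≠ 0 := minpoly.ne_zero hint
  have haev : aeval a (minpoly k a) = 0 := minpoly.aeval k a
  -- X divides the minimal polynomial
  have hXp : X ∣ minpoly k a := by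
    by_contra hX
    rw [X_dvd_iff] at hX
    apply ha
    have h1 : a * aeval a (divX (minpoly k a)) + algebraMap k B ((minpoly k a).coeff 0) = 0 := by
      have h2 := congrArg (aeval a) (X_mul_divX_add (minpoly k a))
      rw [map_add, map_mul, aeval_X, aeval_C, haev] at h2
      exact h2
    set c := (minpoly k a).coeff 0 with hc
    set w := (-c⁻¹) • aeval a (divX (minpoly k a)) with hw
    have hcomm : a * aeval a (divX (minpoly k a)) = aeval a (divX (minpoly k a)) * a := by
      have h2 : a * aeval a (divX (minpoly k a)) = aeval a (X * divX (minpoly k a)) := by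
        rw [map_mul, aeval_X]
      have h3 : aeval a (divX (minpoly k a)) * a = aeval a (X * divX (minpoly k a)) := by
        rw [mul_comm (X : k[X]), map_mul, aeval_X]
      rw [h2, h3]
    have key : a * aeval a (divX (minpoly k a)) = - algebraMap k B c :=
      eq_neg_of_add_eq_zero_left h1
    have h2 : a * w = 1 := by
      rw [hw, mul_smul_comm, key, smul_neg, neg_smul, neg_neg, Algebra.smul_def, ← map_mul,
        inv_mul_cancel₀ hX, map_one]
    have h3 : w * a = 1 := by
      rw [hw, smul_mul_assoc, ← hcomm, key, smul_neg, neg_smul, neg_neg, Algebra.smul_def,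
        ← map_mul, inv_mul_cancel₀ hX, map_one]
    exact ⟨⟨a, w, h2, h3⟩, rfl⟩
  obtain ⟨r, q, hpq, hq⟩ := exists_X_pow_mul (minpoly k a).natDegree (minpoly k a) hp0 le_rfl
  have hq0 : q ≠ 0 := fun h => hq (h ▸ dvd_zero X)
  have hr : r ≠ 0 := by
    rintro rfl
    rw [hpq, pow_zero, one_mul] at hXp
    exact hq hXp
  have hXq : IsCoprime (X : k[X]) q := (Polynomial.prime_X).coprime_iff_not_dvd.mpr hq
  obtain ⟨s, t, hst⟩ := (hXq.pow_left : IsCoprime ((X:k[X])^r) q)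
  refine ⟨aeval a (t * q), ?_, ?_, ?_, ?_⟩
  · -- idempotent
    have h1 : (t*q) * (t*q) - (t*q) = (-(t*s)) * (X^r * q) := by linear_combination (t*q) * hst
    rw [← hpq] at h1
    have h2 : aeval a (t*q) * aeval a (t*q) - aeval a (t*q) = 0 := by
      rw [← map_mul, ← map_sub, h1, map_mul, haev, mul_zero]
    exact sub_eq_zero.mp h2
  · -- nonzero
    intro h
    have hdvd : minpoly k a ∣ t * q := minpoly.dvd k a h
    rw [hpq] at hdvd
    have hXt : (X:k[X])^r ∣ t := (mul_dvd_mul_iff_right hq0).mp hdvd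
    have hX1 : (X:k[X]) ∣ 1 := by
      rw [← hst]
      exact dvd_add ((dvd_pow_self X hr).mul_left s)
        (((dvd_pow_self X hr).trans hXt).mul_right q)
    have := Polynomial.natDegree_le_of_dvd hX1 one_ne_zero
    rw [natDegree_X, natDegree_one] at this
    omega
  · -- a + e is a unit
    have hXg : ¬ (X:k[X]) ∣ (X + t * q) := by
      rw [X_dvd_iff]
      have h0 := congrArg (eval 0) hst
      rw [eval_add, eval_mul, eval_mul, eval_pow, eval_X, zero_pow hr, mul_zero, zero_add,
        eval_one] at h0
      rw [coeff_add, coeff_X_zero, zero_add, coeff_zero_eq_eval_zero, eval_mul, h0]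
      exact one_ne_zero
    have hcop1 : IsCoprime (X + t*q : k[X]) q := by
      have := hXq.add_mul_left_left t
      rwa [mul_comm q t] at this
    have hcop2 : IsCoprime ((X:k[X])^r) (X + t*q) :=
      ((Polynomial.prime_X).coprime_iff_not_dvd.mpr hXg).pow_left
    have hcop : IsCoprime (minpoly k a) (X + t*q) := by
      rw [hpq]; exact hcop2.mul_left hcop1.symm
    obtain ⟨α, β, hαβ⟩ := hcop
    have hgE : aeval a (X + t*q) = a + aeval a (t*q) := by rw [map_add, aeval_X]
    have h1 : aeval a β * (a + aeval a (t*q)) = 1 := by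
      have := congrArg (aeval a) hαβ
      rw [map_add, map_mul, map_mul, haev, mul_zero, zero_add, hgE, map_one] at this
      exact this
    have h2 : (a + aeval a (t*q)) * aeval a β = 1 := by
      have := congrArg (aeval a) (by linear_combination hαβ : (X + t*q) * β + α * (minpoly k a) = 1)
      rw [map_add, map_mul, map_mul, haev, mul_zero, add_zero, hgE, map_one] at this
      exact this
    exact ⟨⟨a + aeval a (t*q), aeval a β, h2, h1⟩, rfl⟩
  · -- not one
    intro hnil hE1
    have hsx : aeval a (s * X^r) = 0 := by
      have := congrArg (aeval a) hst
      rw [map_add, hE1, map_one] at this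
      exact add_eq_right.mp this
    have hdvd : minpoly k a ∣ s * X^r := minpoly.dvd k a hsx
    rw [hpq] at hdvd
    have hqs : q ∣ s := by
      have h' : q * X^r ∣ s * X^r := by rwa [mul_comm] at hdvd
      exact (mul_dvd_mul_iff_right (pow_ne_zero r X_ne_zero)).mp h'
    have hq1 : q ∣ 1 := by
      rw [← hst]
      exact dvd_add (hqs.mul_right (X^r)) (dvd_mul_left q t)
    obtain ⟨c, hcu, hcq⟩ := Polynomial.isUnit_iff.mp (isUnit_of_dvd_one hq1)
    apply hnil
    refine ⟨r, ?_⟩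
    have h0 : a ^ r * algebraMap k B c = 0 := by
      have := haev
      rw [hpq, ← hcq, map_mul, map_pow, aeval_X, aeval_C] at this
      exact this
    have h1 : a ^ r * (algebraMap k B c * algebraMap k B c⁻¹) = 0 := by
      rw [← mul_assoc, h0, zero_mul]
    rwa [← map_mul, mul_inv_cancel₀ hcu.ne_zero, map_one, mul_one] at h1

lemma isUnit_one_add_smul_idem {f : B} (hf : IsIdempotentElem f) {c : k} (hc : c ≠ 0) :
    IsUnit (1 + (c - 1) • f) := by
  have key : ∀ α β : k, α + β + α*β = 0 → (1 + α • f) * (1 + β • f) = 1 := by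
    intro α β h
    have h1 : (α • f) * (β • f) = (α*β) • f := by
      rw [smul_mul_smul_comm, hf.eq]
    calc (1 + α • f) * (1 + β • f) = 1 + (α • f + β • f + (α*β) • (f*f)) := by
          rw [mul_add, add_mul, add_mul, smul_mul_smul_comm]
          simp only [mul_one, one_mul]
          abel
      _ = 1 + (α + β + α*β) • f := by rw [hf.eq]; congr 1; module
      _ = 1 := by rw [h, zero_smul, add_zero]
  have hrel1 : (c-1) + (c⁻¹-1) + (c-1)*(c⁻¹-1) = 0 := by field_simp; ring
  have hrel2 : (c⁻¹-1) + (c-1) + (c⁻¹-1)*(c-1) = 0 := by linear_combination hrel1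
  exact ⟨⟨1 + (c-1) • f, 1 + (c⁻¹-1) • f, key _ _ hrel1, key _ _ hrel2⟩, rfl⟩

/-- Units span a finite-dimensional algebra over a field with more than two elements. -/
lemma mem_span_units [FiniteDimensional k B] (hk : ∃ c : k, c ≠ 0 ∧ c ≠ 1) (a : B) :
    a ∈ Submodule.span k {x : B | IsUnit x} := by
  by_cases ha : IsUnit a
  · exact Submodule.subset_span ha
  obtain ⟨e, hidem, -, hunit, -⟩ := exists_good_idem (k := k) a ha
  obtain ⟨c, hc0, hc1⟩ := hk
  have hu1 : (1 + (c-1) • e) ∈ Submodule.span k {x : B | IsUnit x} :=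
    Submodule.subset_span (isUnit_one_add_smul_idem hidem hc0)
  have hone : (1:B) ∈ Submodule.span k {x : B | IsUnit x} :=
    Submodule.subset_span isUnit_one
  have he : e ∈ Submodule.span k {x : B | IsUnit x} := by
    have heq : e = (c-1)⁻¹ • ((1 + (c-1)•e) - 1) := by
      rw [add_sub_cancel_left, smul_smul, inv_mul_cancel₀ (sub_ne_zero.mpr hc1), one_smul]
    rw [heq]
    exact Submodule.smul_mem _ _ (Submodule.sub_mem _ hu1 hone)
  have hae : (a + e) ∈ Submodule.span k {x : B | IsUnit x} := Submodule.subset_span hunit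
  rw [show a = (a + e) - e from (add_sub_cancel_right a e).symm]
  exact Submodule.sub_mem _ hae he

end Helpers

section Corner

variable {k A : Type*} [Field k] [Ring A] [Algebra k A]

/-- The corner `eAe` as a submodule. -/
def cornerSub (k : Type*) [Field k] {A : Type*} [Ring A] [Algebra k A] (e : A) :
    Submodule k A where
  carrier := {x | e * x * e = x}
  add_mem' := by
    intro x y hx hy
    simp only [Set.mem_setOf_eq] at *
    rw [mul_add, add_mul, hx, hy]
  zero_mem' := by simp
  smul_mem' := by
    intro c x hx
    simp only [Set.mem_setOf_eq] at *
    rw [mul_smul_comm, smul_mul_assoc, hx]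

variable (e : A) [hfact : Fact (IsIdempotentElem e)]

lemma corner_left {x : A} (hx : x ∈ cornerSub k e) : e * x = x := by
  have he : e * e = e := hfact.out
  conv_lhs => rw [← hx]
  rw [← mul_assoc, ← mul_assoc, he]
  exact hx

lemma corner_right {x : A} (hx : x ∈ cornerSub k e) : x * e = x := by
  have he : e * e = e := hfact.out
  conv_lhs => rw [← hx]
  rw [mul_assoc, mul_assoc, he, ← mul_assoc]
  exact hx

instance cornerOne : One (cornerSub k e) :=
  ⟨⟨e, by simp only [cornerSub, Submodule.mem_mk, AddSubmonoid.mem_mk, AddSubsemigroup.mem_mk,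
      Set.mem_setOf_eq]; rw [hfact.out.eq, hfact.out.eq]⟩⟩

instance cornerMul : Mul (cornerSub k e) :=
  ⟨fun x y => ⟨x.1 * y.1, by
    show e * (x.1 * y.1) * e = x.1 * y.1
    rw [← mul_assoc, mul_assoc (e * x.1), corner_left e x.2, corner_right e y.2]⟩⟩

lemma corner_mul_val (x y : cornerSub k e) : (x * y).1 = x.1 * y.1 := rfl
lemma corner_one_val : (1 : cornerSub k e).1 = e := rfl

instance cornerRing : Ring (cornerSub k e) :=
  { (inferInstance : AddCommGroup (cornerSub k e)) with
    mul := (· * ·)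
    one := 1
    mul_assoc := fun x y z => Subtype.ext (mul_assoc x.1 y.1 z.1)
    one_mul := fun x => Subtype.ext (corner_left e x.2)
    mul_one := fun x => Subtype.ext (corner_right e x.2)
    left_distrib := fun x y z => Subtype.ext (mul_add x.1 y.1 z.1)
    right_distrib := fun x y z => Subtype.ext (add_mul x.1 y.1 z.1)
    zero_mul := fun x => Subtype.ext (zero_mul x.1)
    mul_zero := fun x => Subtype.ext (mul_zero x.1) }

instance cornerAlgebra : Algebra k (cornerSub k e) :=
  Algebra.ofModule
    (fun c x y => Subtype.ext (smul_mul_assoc c x.1 y.1))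
    (fun c x y => Subtype.ext (mul_smul_comm c x.1 y.1))

end Corner

section MainLemmas

variable {k A : Type*} [Field k] [Ring A] [Algebra k A] [FiniteDimensional k A]

lemma corner_unit_exists (hk : ∃ c : k, c ≠ 0 ∧ c ≠ 1) (lam : A →ₗ[k] k)
    {e : A} (he : IsIdempotentElem e) {b : A} (hb : lam (e * b * e) ≠ 0) :
    ∃ u v : A, e*u*e = u ∧ e*v*e = v ∧ u*v = e ∧ v*u = e ∧ lam u ≠ 0 := by
  haveI := Fact.mk he
  have hmem : e * b * e ∈ cornerSub k e := by
    show e * (e * b * e) * e = e * b * e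
    rw [← mul_assoc, ← mul_assoc, he.eq, mul_assoc, mul_assoc, he.eq, ← mul_assoc]
  have hexists : ∃ x : cornerSub k e, IsUnit x ∧ lam x.1 ≠ 0 := by
    by_contra hcon
    push_neg at hcon
    have hle : Submodule.span k {x : cornerSub k e | IsUnit x} ≤
        LinearMap.ker (lam.comp (cornerSub k e).subtype) := by
      rw [Submodule.span_le]
      intro x hx
      simp only [SetLike.mem_coe, LinearMap.mem_ker, LinearMap.comp_apply,
        Submodule.subtype_apply]
      exact hcon x hx
    have hsp := mem_span_units (k := k) (B := cornerSub k e) hk ⟨e * b * e, hmem⟩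
    have := hle hsp
    simp only [LinearMap.mem_ker, LinearMap.comp_apply, Submodule.subtype_apply] at this
    exact hb this
  obtain ⟨x, hx, hlx⟩ := hexists
  obtain ⟨u, hu⟩ := hx
  refine ⟨x.1, (↑u⁻¹ : cornerSub k e).1, x.2, (↑u⁻¹ : cornerSub k e).2, ?_, ?_, hlx⟩
  · have : ((u : cornerSub k e) * ↑u⁻¹ : cornerSub k e).1 = (1 : cornerSub k e).1 := by
      rw [u.mul_inv]
    rw [← hu]
    exact this
  · have : ((↑u⁻¹ : cornerSub k e) * u : cornerSub k e).1 = (1 : cornerSub k e).1 := by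
      rw [u.inv_mul]
    rw [← hu]
    exact this

lemma corner_contradiction (hk : ∃ c : k, c ≠ 0 ∧ c ≠ 1) (lam : A →ₗ[k] k)
    (hlam : IsFrobeniusForm lam)
    (hU : ∀ x : A, IsUnit x → lam x ≠ 0)
    (hnil : ∀ x : A, IsNilpotent x → lam x = 0)
    {e : A} (he : IsIdempotentElem e) (he0 : e ≠ 0) (hl1e : lam (1 - e) ≠ 0) : False := by
  have hb : ∃ b, lam (e * b) ≠ 0 := by
    by_contra h
    push_neg at h
    exact he0 (hlam e h)
  obtain ⟨b, hb⟩ := hb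
  have hoff : lam (e*b*(1-e)) = 0 := by
    apply hnil
    refine ⟨2, ?_⟩
    have h0 : (1-e)*e = 0 := by rw [sub_mul, one_mul, he.eq, sub_self]
    have : e*b*(1-e) * (e*b*(1-e)) = e*b*((1-e)*e*(b*(1-e))) := by noncomm_ring
    rw [pow_two, this, h0, zero_mul, mul_zero]
  have hbe : lam (e*b*e) ≠ 0 := by
    have hsplit : e*b = e*b*e + e*b*(1-e) := by noncomm_ring
    rw [hsplit, map_add, hoff, add_zero] at hb
    exact hb
  obtain ⟨u, v, hu_mem, hv_mem, huv, hvu, hlu⟩ := corner_unit_exists hk lam he hbe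
  have hue : u * e = u := by
    conv_lhs => rw [← hu_mem]
    rw [mul_assoc (e*u), he.eq]
    exact hu_mem
  have hev : e * v = v := by
    conv_lhs => rw [← hv_mem]
    rw [← mul_assoc, ← mul_assoc, he.eq]
    exact hv_mem
  set α := -(lam u) / lam (1-e) with hα
  have hα0 : α ≠ 0 := by
    rw [hα]
    exact div_ne_zero (neg_ne_zero.mpr hlu) hl1e
  have hu1e : u * (1-e) = 0 := by rw [mul_sub, mul_one, hue, sub_self]
  have h1ev : (1-e) * v = 0 := by rw [sub_mul, one_mul, hev, sub_self]
  have h1e2 : (1-e) * (1-e) = (1-e) := he.one_sub.eq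
  have key : ∀ β γ : k, β * γ = 1 → ∀ x y : A, x * y = e → x * (1-e) = 0 → (1-e) * y = 0 →
      (x + β • (1-e)) * (y + γ • (1-e)) = 1 := by
    intro β γ hβγ x y hxy hx0 h0y
    rw [mul_add, add_mul, add_mul, hxy, mul_smul_comm, hx0, smul_zero,
      smul_mul_assoc, h0y, smul_zero, smul_mul_smul_comm, h1e2, hβγ, one_smul,
      add_zero, zero_add, add_sub_cancel]
  have h1 : (u + α • (1-e)) * (v + α⁻¹ • (1-e)) = 1 :=
    key α α⁻¹ (mul_inv_cancel₀ hα0) u v huv hu1e h1ev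
  have hv1e : v * (1-e) = 0 := by
    have hve : v * e = v := by
      conv_lhs => rw [← hv_mem]
      rw [mul_assoc (e*v), he.eq]
      exact hv_mem
    rw [mul_sub, mul_one, hve, sub_self]
  have h1eu : (1-e) * u = 0 := by
    have heu : e * u = u := by
      conv_lhs => rw [← hu_mem]
      rw [← mul_assoc, ← mul_assoc, he.eq]
      exact hu_mem
    rw [sub_mul, one_mul, heu, sub_self]
  have h2 : (v + α⁻¹ • (1-e)) * (u + α • (1-e)) = 1 :=
    key α⁻¹ α (inv_mul_cancel₀ hα0) v u hvu hv1e h1eu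
  apply hU (u + α • (1-e)) ⟨⟨_, _, h1, h2⟩, rfl⟩
  rw [map_add, map_smul, smul_eq_mul, hα, div_mul_cancel₀ _ hl1e, add_neg_cancel]

end MainLemmas


set_option maxHeartbeats 1000000 in
/-- Let `k` be a field with more than two elements, `A` a
finite-dimensional unital associative `k`-algebra, and `lam` a Frobenius form on `A`.
Then either the structure map `k → A` is surjective (i.e. `A = k`), or there exists a
unit `u` of `A` with `lam u = 0`. -/
theorem stmt7 (k : Type*) [Field k] (hk : ∃ c : k, c ≠ 0 ∧ c ≠ 1)
    (A : Type*) [Ring A] [Algebra k A] [FiniteDimensional k A]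
    (lam : A →ₗ[k] k) (hlam : IsFrobeniusForm lam) :
    Function.Surjective (algebraMap k A) ∨ ∃ u : Aˣ, lam ↑u = 0 := by
  by_cases hex : ∃ u : Aˣ, lam ↑u = 0
  · exact Or.inr hex
  push_neg at hex
  left
  have hU : ∀ x : A, IsUnit x → lam x ≠ 0 := by
    intro x hx h0
    exact hex hx.unit (by rwa [IsUnit.unit_spec])
  have hone : lam 1 ≠ 0 := hU 1 isUnit_one
  have hnil : ∀ x : A, IsNilpotent x → lam x = 0 := by
    intro x hx
    by_contra h0
    apply hU (1 + (-(lam 1)/(lam x)) • x) (hx.smul _).isUnit_one_add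
    rw [map_add, map_smul, smul_eq_mul]
    field_simp
    ring
  have hker : ∀ x : A, lam x = 0 → x = 0 := by
    intro x hx0
    by_contra hxne
    by_cases hcase : ∀ y : A, lam y = 0 → IsNilpotent y
    · -- everything in the kernel is nilpotent
      have hxnil : IsNilpotent x := hcase x hx0
      have hb : ∃ b, lam (x * b) ≠ 0 := by
        by_contra hb
        push_neg at hb
        exact hxne (hlam x hb)
      obtain ⟨b, hb⟩ := hb
      set h₂ := b - (lam b / lam 1) • 1 with hh₂
      have hlh₂ : lam h₂ = 0 := by
        rw [hh₂, map_sub, map_smul, smul_eq_mul]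
        field_simp
        ring
      have hnilh₂ : IsNilpotent h₂ := hcase _ hlh₂
      have hxh₂ : lam (x * h₂) ≠ 0 := by
        rw [hh₂, mul_sub, mul_smul_comm, mul_one, map_sub, map_smul, smul_eq_mul, hx0,
          mul_zero, sub_zero]
        exact hb
      set s := -(lam 1) / lam (x * h₂) with hs
      apply hU ((1 + x) * (1 + s • h₂))
        ((hxnil.isUnit_one_add).mul ((hnilh₂.smul s).isUnit_one_add))
      have hexp : (1+x)*(1+s•h₂) = 1 + x + (s•h₂ + s•(x*h₂)) := by
        rw [mul_add, add_mul, add_mul]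
        simp only [mul_one, one_mul, mul_smul_comm]
      rw [hexp, map_add, map_add, map_add, map_smul, map_smul, hlh₂, hx0, smul_eq_mul,
        smul_eq_mul, mul_zero, hs]
      field_simp
      ring
    · -- some kernel element is not nilpotent
      push_neg at hcase
      obtain ⟨y, hy0, hynil⟩ := hcase
      have hyu : ¬IsUnit y := fun h => hU y h hy0
      obtain ⟨e, hidem, he0, -, he1'⟩ := exists_good_idem (k := k) y hyu
      have he1 : e ≠ 1 := he1' hynil
      by_cases hle : lam (1 - e) = 0
      · refine corner_contradiction hk lam hlam hU hnil hidem.one_sub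
          (sub_ne_zero.mpr (Ne.symm he1)) ?_
        rw [sub_sub_cancel]
        have : lam (1 - e) = lam 1 - lam e := by rw [map_sub]
        rw [hle] at this
        intro h
        rw [h, sub_zero] at this
        exact hone this.symm
      · exact corner_contradiction hk lam hlam hU hnil hidem he0 hle
  have hinj : Function.Injective lam := (injective_iff_map_eq_zero lam).mpr hker
  rcases subsingleton_or_nontrivial A with h | h
  · intro a
    exact ⟨0, Subsingleton.elim _ _⟩
  · have hfin : Module.finrank k A ≤ 1 := by
      have h1 := LinearMap.finrank_le_finrank_of_injective hinj
      simpa using h1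
    have hrank : Module.finrank k A = 1 :=
      le_antisymm hfin Module.finrank_pos
    have hspan : Submodule.span k {(1:A)} = ⊤ := by
      apply Submodule.eq_top_of_finrank_eq
      rw [finrank_span_singleton (one_ne_zero (α := A)), hrank]
    intro a
    have ha : a ∈ Submodule.span k {(1:A)} := by rw [hspan]; exact Submodule.mem_top
    obtain ⟨c, hc⟩ := Submodule.mem_span_singleton.mp ha
    exact ⟨c, by rw [Algebra.algebraMap_eq_smul_one]; exact hc⟩
end

section
/- Let k be a field with more than two elements and let A be a finite-dimensional unital associative k-algebra with dim_k A ≥ 2 that admits a Frobenius form. Then there exists a Frobenius form λ' on A with λ'(1) = 0. -/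
namespace Stmt8Aux

variable (k : Type*) {A : Type*} [Field k] [Ring A] [Algebra k A]

/-- The "corner" submodule associated to an idempotent `e`: elements fixed by `e * · * e`. -/
def Cor (e : A) : Submodule k A where
  carrier := {x | e * x * e = x}
  add_mem' := by
    intro a b ha hb
    simp only [Set.mem_setOf_eq] at *
    rw [mul_add, add_mul, ha, hb]
  zero_mem' := by simp
  smul_mem' := by
    intro c x hx
    simp only [Set.mem_setOf_eq] at *
    rw [mul_smul_comm, smul_mul_assoc, hx]

variable {k}

lemma mem_cor {e x : A} : x ∈ Cor k e ↔ e * x * e = x := Iff.rfl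

lemma mem_cor_one (x : A) : x ∈ Cor k (1 : A) := by simp [mem_cor]

lemma cor_mul_left {e x : A} (he : e * e = e) (hx : x ∈ Cor k e) : e * x = x := by
  conv_lhs => rw [← hx]
  rw [← mul_assoc, ← mul_assoc, he, hx]

lemma cor_mul_right {e x : A} (he : e * e = e) (hx : x ∈ Cor k e) : x * e = x := by
  conv_lhs => rw [← hx]
  rw [mul_assoc, he, hx]

lemma mul_mem_cor {e x y : A} (he : e * e = e) (hx : x ∈ Cor k e) (hy : y ∈ Cor k e) :
    x * y ∈ Cor k e := by
  rw [mem_cor]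
  calc e * (x * y) * e = (e * x) * (y * e) := by rw [← mul_assoc, mul_assoc]
  _ = x * y := by rw [cor_mul_left he hx, cor_mul_right he hy]

lemma e_mem_cor {e : A} (he : e * e = e) : e ∈ Cor k e := by
  rw [mem_cor, he, he]

lemma pow_mem_cor {e b : A} (he : e * e = e) (hb : b ∈ Cor k e) {m : ℕ} (hm : 0 < m) :
    b ^ m ∈ Cor k e := by
  induction m with
  | zero => omega
  | succ m ih =>
    rcases Nat.eq_zero_or_pos m with h | h
    · subst h; simpa using hb
    · rw [pow_succ]; exact mul_mem_cor he (ih h) hb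

lemma cor_mono {e u : A} (he : e * e = e) (hu : u ∈ Cor k e) : Cor k u ≤ Cor k e := by
  intro x hx
  rw [mem_cor] at hx ⊢
  have h1 : e * u = u := cor_mul_left he hu
  have h2 : u * e = u := cor_mul_right he hu
  calc e * x * e = e * (u * x * u) * e := by rw [hx]
  _ = (e * u) * x * (u * e) := by noncomm_ring
  _ = u * x * u := by rw [h1, h2]
  _ = x := hx

variable (k) in
/-- `g` is a unit of the corner ring of `e` (with identity `e`). -/
def EUnit (e g : A) : Prop :=
  g ∈ Cor k e ∧ ∃ h ∈ Cor k e, g * h = e ∧ h * g = e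

/-- `lam` restricted to the corner of `e` is (left-)nondegenerate. -/
def Frob (e : A) (lam : A →ₗ[k] k) : Prop :=
  ∀ a ∈ Cor k e, (∀ b ∈ Cor k e, lam (a * b) = 0) → a = 0

set_option maxHeartbeats 1000000 in
lemma trichotomy [FiniteDimensional k A] {e b : A} (he : e * e = e) (hb : b ∈ Cor k e)
    (hA : 0 < Module.finrank k A) :
    EUnit k e b ∨ (∃ N, 0 < N ∧ b ^ N = 0) ∨
      (∃ u : A, u * u = u ∧ u ∈ Cor k e ∧ u ≠ 0 ∧ u ≠ e) := by
  set n := Module.finrank k A with hn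
  set T : A →ₗ[k] A := LinearMap.mulRight k (b ^ n) with hT
  have hTapp : ∀ x : A, T x = x * b ^ n := fun x => rfl
  -- stabilization
  have stab : ∀ x : A, x * b ^ n * b ^ n = 0 → x * b ^ n = 0 := by
    intro x hx
    have h1 : ((LinearMap.mulRight k b) ^ (n + n)) x = 0 := by
      rw [LinearMap.pow_mulRight, LinearMap.mulRight_apply, pow_add, ← mul_assoc]
      exact hx
    have h2 := Module.End.ker_pow_eq_ker_pow_finrank_of_le
      (f := LinearMap.mulRight k b) (m := n + n) (Nat.le_add_right n n)
    have h3 : x ∈ LinearMap.ker ((LinearMap.mulRight k b) ^ n) := by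
      rw [← hn] at h2
      rw [← h2]
      exact LinearMap.mem_ker.mpr h1
    have h4 := LinearMap.mem_ker.mp h3
    rwa [LinearMap.pow_mulRight, LinearMap.mulRight_apply] at h4
  set K : Submodule k A := Cor k e ⊓ LinearMap.ker T with hK
  set I : Submodule k A := (Cor k e).map T with hI
  have hbn : b ^ n ∈ Cor k e := pow_mem_cor he hb hA
  -- trivial intersection
  have hKI : ∀ x : A, x ∈ K → x ∈ I → x = 0 := by
    intro x hxK hxI
    obtain ⟨w, hw, hwx⟩ := hxI
    have hx0 : x * b ^ n = 0 := (LinearMap.mem_ker.mp hxK.2)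
    have : w * b ^ n = 0 := by
      apply stab
      rw [← hTapp w, hwx]
      exact hx0
    rw [← hwx, hTapp, this]
  have hdisj : Disjoint K I := by
    rw [Submodule.disjoint_def]
    intro x hxK hxI
    exact hKI x hxK hxI
  -- dimensions
  have hdims : Module.finrank k I + Module.finrank k K = Module.finrank k (Cor k e) := by
    have h0 := LinearMap.finrank_range_add_finrank_ker (T.domRestrict (Cor k e))
    have h1 : LinearMap.range (T.domRestrict (Cor k e)) = I := by
      rw [hI]; exact LinearMap.range_domRestrict _ _
    have h2 : (LinearMap.ker (T.domRestrict (Cor k e))).map (Cor k e).subtype = K := by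
      ext x
      simp only [Submodule.mem_map, LinearMap.mem_ker, LinearMap.domRestrict_apply, hK,
        Submodule.mem_inf]
      constructor
      · rintro ⟨⟨y, hy⟩, hy0, rfl⟩
        exact ⟨hy, hy0⟩
      · rintro ⟨hx1, hx2⟩
        exact ⟨⟨x, hx1⟩, hx2, rfl⟩
    rw [h1] at h0
    rw [← h2, Submodule.finrank_map_subtype_eq]
    exact h0
  have hIle : I ≤ Cor k e := by
    rintro x ⟨w, hw, rfl⟩
    rw [hTapp]
    exact mul_mem_cor he hw hbn
  have hKle : K ≤ Cor k e := inf_le_left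
  have hsup : K ⊔ I = Cor k e := by
    apply Submodule.eq_of_le_of_finrank_le (sup_le hKle hIle)
    have h3 := Submodule.finrank_sup_add_finrank_inf_eq K I
    rw [hdisj.eq_bot, finrank_bot, add_zero] at h3
    omega
  -- decompose e
  have hesup : e ∈ K ⊔ I := hsup.symm ▸ e_mem_cor he
  obtain ⟨u, huK, v, hvI, huv⟩ := Submodule.mem_sup.mp hesup
  have hucor : u ∈ Cor k e := hKle huK
  have hvcor : v ∈ Cor k e := hIle hvI
  -- multiplication stability
  have hmulK : ∀ x : A, x ∈ Cor k e → ∀ y ∈ K, x * y ∈ K := by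
    intro x hx y hy
    refine ⟨mul_mem_cor he hx (hKle hy), LinearMap.mem_ker.mpr ?_⟩
    rw [hTapp, mul_assoc, ← hTapp, LinearMap.mem_ker.mp hy.2, mul_zero]
  have hmulI : ∀ x : A, x ∈ Cor k e → ∀ y ∈ I, x * y ∈ I := by
    intro x hx y hy
    obtain ⟨w, hw, rfl⟩ := hy
    exact ⟨x * w, mul_mem_cor he hx hw, by rw [hTapp, hTapp, mul_assoc]⟩
  -- u is idempotent
  have hue : u * e = u := cor_mul_right he hucor
  have huu : u * u = u := by
    have hsum : u * u + u * v = u := by rw [← mul_add, huv]; exact hue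
    have h5 : u - u * u = u * v := (eq_sub_of_add_eq' hsum).symm
    have h6 : u - u * u ∈ K := sub_mem huK (hmulK u hucor u huK)
    have h7 : u - u * u ∈ I := h5 ▸ hmulI u hucor v hvI
    have := hKI _ h6 h7
    rw [sub_eq_zero] at this
    exact this.symm
  by_cases hu0 : u = 0
  · -- b is an e-unit
    left
    have hKbot : ∀ x ∈ K, x = 0 := by
      intro x hx
      have hxe : x * e = x := cor_mul_right he (hKle hx)
      have : x ∈ I := by
        rw [← hxe, ← huv, hu0, zero_add]
        exact hmulI x (hKle hx) v hvI
      exact hKI x hx this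
    obtain ⟨m, hm⟩ : ∃ m, n = m + 1 := ⟨n - 1, by omega⟩
    have hbinj : ∀ x ∈ Cor k e, x * b = 0 → x = 0 := by
      intro x hx hxb
      apply hKbot
      refine ⟨hx, LinearMap.mem_ker.mpr ?_⟩
      rw [hTapp, hm, pow_succ', ← mul_assoc, hxb, zero_mul]
    -- the linear map x ↦ x * b on the corner
    have hmaps : ∀ x ∈ Cor k e, (LinearMap.mulRight k b) x ∈ Cor k e := by
      intro x hx
      simpa using mul_mem_cor he hx hb
    set φ : Cor k e →ₗ[k] Cor k e := (LinearMap.mulRight k b).restrict hmaps with hφ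
    have hφinj : Function.Injective φ := by
      rw [← LinearMap.ker_eq_bot]
      rw [Submodule.eq_bot_iff]
      rintro ⟨x, hx⟩ hxk
      have : x * b = 0 := by
        have := congrArg Subtype.val (LinearMap.mem_ker.mp hxk)
        simpa [hφ, LinearMap.restrict_apply] using this
      exact Subtype.ext (hbinj x hx this)
    have hφsurj : Function.Surjective φ := (LinearMap.injective_iff_surjective).mp hφinj
    obtain ⟨⟨c, hc⟩, hcb⟩ := hφsurj ⟨e, e_mem_cor he⟩
    have hcb' : c * b = e := by
      have := congrArg Subtype.val hcb
      simpa [hφ, LinearMap.restrict_apply] using this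
    have hbc : b * c = e := by
      have h8 : (b * c - e) * b = 0 := by
        rw [sub_mul, mul_assoc, hcb', cor_mul_right he hb, cor_mul_left he hb, sub_self]
      have h9 : b * c - e ∈ Cor k e := sub_mem (mul_mem_cor he hb hc) (e_mem_cor he)
      have := hbinj _ h9 h8
      rwa [sub_eq_zero] at this
    exact ⟨hb, c, hc, hbc, hcb'⟩
  · by_cases hue' : u = e
    · -- b is nilpotent
      right; left
      refine ⟨n, hA, ?_⟩
      have hek : e ∈ K := hue' ▸ huK
      have h10 : e * b ^ n = 0 := by
        have h := LinearMap.mem_ker.mp hek.2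
        rwa [hTapp] at h
      rw [← cor_mul_left he hbn, h10]
    · right; right
      exact ⟨u, huu, hucor, hu0, hue'⟩

lemma eunit_sub_nilpotent {e z : A} (he : e * e = e) (hz : z ∈ Cor k e) {N : ℕ}
    (hN : 0 < N) (hzN : z ^ N = 0) : EUnit k e (e - z) := by
  set a : ℕ → A := fun i => e * z ^ i with ha
  have haz : ∀ i, a i ∈ Cor k e := by
    intro i
    rcases Nat.eq_zero_or_pos i with h | h
    · simp only [ha, h, pow_zero, mul_one]
      exact e_mem_cor he
    · exact mul_mem_cor he (e_mem_cor he) (pow_mem_cor he hz h)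
  have hstep : ∀ i, z * a i = a (i + 1) := by
    intro i
    rcases Nat.eq_zero_or_pos i with h | h
    · simp only [ha, h, pow_zero, mul_one, zero_add, pow_one]
      rw [cor_mul_right he hz, cor_mul_left he hz]
    · have h1 : z ^ (i + 1) ∈ Cor k e := pow_mem_cor he hz (by omega)
      simp only [ha]
      rw [← mul_assoc, cor_mul_right he hz, cor_mul_left he h1, pow_succ']
  have hstep' : ∀ i, a i * z = a (i + 1) := by
    intro i
    simp only [ha, pow_succ, mul_assoc]
  set w : A := ∑ i ∈ Finset.range N, a i with hw
  have hwcor : w ∈ Cor k e := Submodule.sum_mem _ (fun i _ => haz i)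
  have haN : a N = 0 := by simp [ha, hzN]
  have ha0 : a 0 = e := by simp [ha]
  refine ⟨sub_mem (e_mem_cor he) hz, w, hwcor, ?_, ?_⟩
  · have : (e - z) * w = ∑ i ∈ Finset.range N, (a i - a (i + 1)) := by
      rw [hw, Finset.mul_sum]
      apply Finset.sum_congr rfl
      intro i _
      rw [sub_mul, cor_mul_left he (haz i), hstep]
    rw [this, Finset.sum_range_sub' a N, ha0, haN, sub_zero]
  · have : w * (e - z) = ∑ i ∈ Finset.range N, (a i - a (i + 1)) := by
      rw [hw, Finset.sum_mul]
      apply Finset.sum_congr rfl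
      intro i _
      rw [mul_sub, cor_mul_right he (haz i), hstep']
    rw [this, Finset.sum_range_sub' a N, ha0, haN, sub_zero]

lemma eunit_scaled {e u : A} (he : e * e = e) (hu : u * u = u) (hucor : u ∈ Cor k e)
    {s t : k} (hs : s ≠ 0) (ht : t ≠ 0) : EUnit k e (s • u + t • (e - u)) := by
  set v : A := e - u with hv
  have hvcor : v ∈ Cor k e := sub_mem (e_mem_cor he) hucor
  have heu : e * u = u := cor_mul_left he hucor
  have hue : u * e = u := cor_mul_right he hucor
  have huv : u * v = 0 := by rw [hv, mul_sub, hue, hu, sub_self]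
  have hvu : v * u = 0 := by rw [hv, sub_mul, heu, hu, sub_self]
  have hvv : v * v = v := by
    rw [hv, sub_mul, mul_sub, mul_sub, he, heu, hue, hu]; abel
  refine ⟨add_mem (Submodule.smul_mem _ _ hucor) (Submodule.smul_mem _ _ hvcor),
    s⁻¹ • u + t⁻¹ • v, add_mem (Submodule.smul_mem _ _ hucor) (Submodule.smul_mem _ _ hvcor), ?_, ?_⟩
  · rw [add_mul, mul_add, mul_add, smul_mul_assoc, smul_mul_assoc, smul_mul_assoc,
      smul_mul_assoc, mul_smul_comm, mul_smul_comm, mul_smul_comm, mul_smul_comm,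
      hu, huv, hvu, hvv, smul_zero, smul_zero, smul_zero, smul_zero, add_zero, zero_add,
      smul_smul, smul_smul, mul_inv_cancel₀ hs, mul_inv_cancel₀ ht, one_smul, one_smul]
    rw [hv]; abel
  · rw [add_mul, mul_add, mul_add, smul_mul_assoc, smul_mul_assoc, smul_mul_assoc,
      smul_mul_assoc, mul_smul_comm, mul_smul_comm, mul_smul_comm, mul_smul_comm,
      hu, huv, hvu, hvv, smul_zero, smul_zero, smul_zero, smul_zero, add_zero, zero_add,
      smul_smul, smul_smul, inv_mul_cancel₀ hs, inv_mul_cancel₀ ht, one_smul, one_smul]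
    rw [hv]; abel

lemma eunit_add {e u g : A} (he : e * e = e) (hu : u * u = u) (hucor : u ∈ Cor k e)
    (hg : EUnit k u g) : EUnit k e (g + (e - u)) := by
  set v : A := e - u with hv
  obtain ⟨hgcor, h, hhcor, hgh, hhg⟩ := hg
  have hgcor' : g ∈ Cor k e := cor_mono he hucor hgcor
  have hhcor' : h ∈ Cor k e := cor_mono he hucor hhcor
  have hvcor : v ∈ Cor k e := sub_mem (e_mem_cor he) hucor
  have hgv : g * v = 0 := by
    rw [hv, mul_sub, cor_mul_right he hgcor', cor_mul_right hu hgcor, sub_self]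
  have hvh : v * h = 0 := by
    rw [hv, sub_mul, cor_mul_left he hhcor', cor_mul_left hu hhcor, sub_self]
  have hhv : h * v = 0 := by
    rw [hv, mul_sub, cor_mul_right he hhcor', cor_mul_right hu hhcor, sub_self]
  have hvg : v * g = 0 := by
    rw [hv, sub_mul, cor_mul_left he hgcor', cor_mul_left hu hgcor, sub_self]
  have hvv : v * v = v := by
    have heu : e * u = u := cor_mul_left he hucor
    have hue : u * e = u := cor_mul_right he hucor
    rw [hv, sub_mul, mul_sub, mul_sub, he, heu, hue, hu]; abel
  refine ⟨add_mem hgcor' hvcor, h + v, add_mem hhcor' hvcor, ?_, ?_⟩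
  · rw [mul_add, add_mul, add_mul, hgh, hgv, hvh, hvv, add_zero, zero_add, hv]; abel
  · rw [mul_add, add_mul, add_mul, hhg, hhv, hvg, hvv, add_zero, zero_add, hv]; abel

lemma frob_corner (lam : A →ₗ[k] k) {e u : A} (he : e * e = e) (hu : u * u = u)
    (hucor : u ∈ Cor k e) (hmix : ∀ y : A, lam (u * y * (e - u)) = 0)
    (hfr : Frob e lam) : Frob u lam := by
  intro a ha hab
  set v : A := e - u with hv
  have hacor : a ∈ Cor k e := cor_mono he hucor ha
  have hau : a * u = a := cor_mul_right hu ha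
  have hua : u * a = a := cor_mul_left hu ha
  have hav : a * v = 0 := by
    rw [hv, mul_sub, cor_mul_right he hacor, hau, sub_self]
  apply hfr a hacor
  intro b hb
  have hbe : e * b * e = b := hb
  have hexp : a * b = a * (u * b * u) + u * (a * u * b) * v + (a * v) * (b * u) +
      (a * v) * (b * v) := by
    have h1 : a * b = a * (e * b * e) := by rw [hbe]
    have h2 : a * (e * b * e) = a * (u * b * u) + a * (u * b * v) + (a * v) * (b * u) +
        (a * v) * (b * v) := by
      rw [hv]; noncomm_ring
    have h3 : a * (u * b * v) = u * (a * u * b) * v := by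
      conv_lhs => rw [← hua]
      noncomm_ring
    rw [h1, h2, h3]
  rw [hexp]
  have t1 : lam (a * (u * b * u)) = 0 := by
    apply hab
    rw [mem_cor]
    calc u * (u * b * u) * u = (u * u) * b * (u * u) := by noncomm_ring
    _ = u * b * u := by rw [hu]
  have t2 : lam (u * (a * u * b) * v) = 0 := hmix _
  rw [map_add, map_add, map_add, t1, t2, hav, zero_mul, zero_mul, map_zero]
  simp

lemma exists_eunit_ne_zero [FiniteDimensional k A] (lam : A →ₗ[k] k) {c : k}
    (hc0 : c ≠ 0) (hc1 : c ≠ 1) (hA : 0 < Module.finrank k A) :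
    ∀ n : ℕ, ∀ e : A, e * e = e → e ≠ 0 → Frob e lam →
      Module.finrank k (Cor k e) ≤ n → ∃ g, EUnit k e g ∧ lam g ≠ 0 := by
  intro n
  induction n with
  | zero =>
    intro e he he0 _ hrk
    exfalso
    have hbot : Cor k e = ⊥ := Submodule.finrank_eq_zero.mp (Nat.le_zero.mp hrk)
    exact he0 (by simpa [hbot] using e_mem_cor (k := k) he)
  | succ n ih =>
    intro e he he0 hfr hrk
    by_contra hH
    push_neg at hH
    have heunit : EUnit k e e := ⟨e_mem_cor he, e, e_mem_cor he, he, he⟩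
    have hle : lam e = 0 := hH e heunit
    obtain ⟨b, hbcor, hlb⟩ : ∃ b ∈ Cor k e, lam b ≠ 0 := by
      by_contra hall
      push_neg at hall
      apply he0
      apply hfr e (e_mem_cor he)
      intro b hb
      exact hall _ (mul_mem_cor he (e_mem_cor he) hb)
    rcases trichotomy he hbcor hA with hunit | ⟨N, hN, hbN⟩ | ⟨u, huu, hucor, hu0, hue⟩
    · exact hlb (hH b hunit)
    · have h2 := hH _ (eunit_sub_nilpotent he hbcor hN hbN)
      rw [map_sub, hle, zero_sub, neg_eq_zero] at h2
      exact hlb h2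
    · set v : A := e - u with hv
      have hv0 : v ≠ 0 := sub_ne_zero.mpr (Ne.symm hue)
      have hvcor : v ∈ Cor k e := sub_mem (e_mem_cor he) hucor
      have huve : u + v = e := by rw [hv]; abel
      have hsum : lam u + lam v = 0 := by rw [← map_add, huve]; exact hle
      have hscaled := hH _ (eunit_scaled he huu hucor one_ne_zero hc0)
      rw [← hv, map_add, map_smul, map_smul, smul_eq_mul, smul_eq_mul, one_mul] at hscaled
      have h7 : (c - 1) * lam v = 0 := by linear_combination hscaled - hsum
      have hlv : lam v = 0 := by
        rcases mul_eq_zero.mp h7 with h | h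
        · exact absurd (sub_eq_zero.mp h) hc1
        · exact h
      have hlu : lam u = 0 := by rw [hlv, add_zero] at hsum; exact hsum
      have heu : e * u = u := cor_mul_left he hucor
      have hvu : v * u = 0 := by rw [hv, sub_mul, heu, huu, sub_self]
      have hmix : ∀ y : A, lam (u * y * v) = 0 := by
        intro y
        set x : A := u * y * v with hx
        have hxcor : x ∈ Cor k e := by
          rw [hx, mem_cor]
          calc e * (u * y * v) * e = (e * u) * y * (v * e) := by noncomm_ring
          _ = u * y * v := by rw [heu, cor_mul_right he hvcor]
        have hxx : x * x = 0 := by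
          calc x * x = u * y * ((v * u) * (y * v)) := by rw [hx]; noncomm_ring
          _ = 0 := by rw [hvu, zero_mul, mul_zero]
        have hx2 : (-x) ^ 2 = 0 := by rw [neg_sq, pow_two, hxx]
        have h8 := hH _ (eunit_sub_nilpotent he (neg_mem hxcor) two_pos hx2)
        rw [sub_neg_eq_add, map_add, hle, zero_add] at h8
        exact h8
      have hufr : Frob u lam := by
        apply frob_corner lam he huu hucor _ hfr
        intro y
        rw [← hv]
        exact hmix y
      have hne : Cor k u ≠ Cor k e := by
        intro hcon
        have hvin : v ∈ Cor k u := hcon ▸ hvcor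
        have huv : u * v = 0 := by
          rw [hv, mul_sub, cor_mul_right he hucor, huu, sub_self]
        have hvin' : u * v * u = v := hvin
        apply hv0
        rw [← hvin', huv, zero_mul]
      have hlt : Cor k u < Cor k e := lt_of_le_of_ne (cor_mono he hucor) hne
      have hrk' : Module.finrank k (Cor k u) ≤ n := by
        have := Submodule.finrank_lt_finrank_of_lt hlt
        omega
      obtain ⟨g, hg, hlg⟩ := ih u huu hu0 hufr hrk'
      have h9 := hH _ (eunit_add he huu hucor hg)
      rw [← hv, map_add, hlv, add_zero] at h9
      exact hlg h9

lemma sq_zero_unit (lam : A →ₗ[k] k) {x : A} (hxx : x * x = 0) (hlx : lam x ≠ 0)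
    (h1 : lam 1 ≠ 0) :
    ∃ w wi : A, w * wi = 1 ∧ wi * w = 1 ∧ lam w = 0 := by
  set s : k := lam 1 / lam x with hs
  set a : A := s • x with hadef
  have hks : a * a = 0 := by
    rw [hadef, smul_mul_assoc, mul_smul_comm, hxx, smul_zero, smul_zero]
  refine ⟨1 - a, 1 + a, ?_, ?_, ?_⟩
  · calc (1 - a) * (1 + a) = 1 - a * a := by noncomm_ring
    _ = 1 := by rw [hks, sub_zero]
  · calc (1 + a) * (1 - a) = 1 - a * a := by noncomm_ring
    _ = 1 := by rw [hks, sub_zero]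
  · rw [map_sub, hadef, map_smul, smul_eq_mul, hs, div_mul_cancel₀ _ hlx, sub_self]

lemma corner_case [FiniteDimensional k A] (lam : A →ₗ[k] k) {c : k} (hc0 : c ≠ 0) (hc1 : c ≠ 1)
    (hfr1 : Frob (1 : A) lam) (hA : 0 < Module.finrank k A) (h1 : lam 1 ≠ 0) {e : A}
    (hee : e * e = e) (he0 : e ≠ 0)
    (hmix : ∀ y : A, lam (e * y * (1 - e)) = 0) (heL : lam e = 0) :
    ∃ w wi : A, w * wi = 1 ∧ wi * w = 1 ∧ lam w = 0 := by
  have hone : (1 : A) * 1 = 1 := one_mul 1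
  have hecor : e ∈ Cor k (1 : A) := mem_cor_one e
  have hfre : Frob e lam := frob_corner lam hone hee hecor hmix hfr1
  obtain ⟨g, ⟨hgcor, g', hg'cor, hgg', hg'g⟩, hlg⟩ :=
    exists_eunit_ne_zero lam hc0 hc1 hA (Module.finrank k (Cor k e)) e hee he0 hfre le_rfl
  set f : A := 1 - e with hf
  have hlf : lam f = lam 1 := by rw [hf, map_sub, heL, sub_zero]
  set s : k := -(lam 1) / lam g with hs
  have hge : g * e = g := cor_mul_right hee hgcor
  have heg : e * g = g := cor_mul_left hee hgcor
  have hg'e : g' * e = g' := cor_mul_right hee hg'cor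
  have heg' : e * g' = g' := cor_mul_left hee hg'cor
  have hgf : g * f = 0 := by rw [hf, mul_sub, mul_one, hge, sub_self]
  have hfg : f * g = 0 := by rw [hf, sub_mul, one_mul, heg, sub_self]
  have hg'f : g' * f = 0 := by rw [hf, mul_sub, mul_one, hg'e, sub_self]
  have hfg' : f * g' = 0 := by rw [hf, sub_mul, one_mul, heg', sub_self]
  have hff : f * f = f := by
    rw [hf, sub_mul, one_mul, mul_sub, mul_one, hee]; abel
  have hsne : s ≠ 0 := div_ne_zero (neg_ne_zero.mpr h1) hlg
  refine ⟨s • g + f, s⁻¹ • g' + f, ?_, ?_, ?_⟩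
  · rw [add_mul, mul_add, mul_add, smul_mul_assoc, smul_mul_assoc, mul_smul_comm,
      mul_smul_comm, hgg', hgf, hfg', hff, smul_zero, smul_zero, smul_smul,
      mul_inv_cancel₀ hsne, one_smul, add_zero, zero_add, hf]
    abel
  · rw [add_mul, mul_add, mul_add, smul_mul_assoc, smul_mul_assoc, mul_smul_comm,
      mul_smul_comm, hg'g, hg'f, hfg, hff, smul_zero, smul_zero, smul_smul,
      inv_mul_cancel₀ hsne, one_smul, add_zero, zero_add, hf]
    abel
  · rw [map_add, map_smul, smul_eq_mul, hs, div_mul_cancel₀ _ hlg, hlf, neg_add_cancel]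

end Stmt8Aux


/-- Let `k` be a field with more than two elements and `A` a
finite-dimensional unital associative `k`-algebra with `dim_k A ≥ 2` that admits a
Frobenius form. Then there exists a Frobenius form `lam'` on `A` with `lam' 1 = 0`. -/
theorem stmt8 (k : Type*) [Field k] (hk : ∃ c : k, c ≠ 0 ∧ c ≠ 1)
    (A : Type*) [Ring A] [Algebra k A] [FiniteDimensional k A]
    (hdim : 2 ≤ Module.finrank k A)
    (hex : ∃ lam : A →ₗ[k] k, IsFrobeniusForm lam) :
    ∃ lam' : A →ₗ[k] k, IsFrobeniusForm lam' ∧ lam' 1 = 0 := by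
  open Stmt8Aux in
  obtain ⟨c, hc0, hc1⟩ := hk
  obtain ⟨lam, hlam⟩ := hex
  by_cases h1 : lam 1 = 0
  · exact ⟨lam, hlam, h1⟩
  have hA : 0 < Module.finrank k A := by omega
  have hnt : Nontrivial A := Module.nontrivial_of_finrank_pos hA
  have hfr1 : Stmt8Aux.Frob (1 : A) lam := by
    intro a _ hab
    exact hlam a (fun b => hab b (Stmt8Aux.mem_cor_one b))
  suffices hw : ∃ w wi : A, w * wi = 1 ∧ wi * w = 1 ∧ lam w = 0 by
    obtain ⟨w, wi, hwwi, hwiw, hlw⟩ := hw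
    refine ⟨lam ∘ₗ LinearMap.mulLeft k w, ?_, ?_⟩
    · intro a ha
      have hwa : w * a = 0 := by
        apply hlam
        intro b
        have hb := ha b
        simpa [mul_assoc] using hb
      calc a = (wi * w) * a := by rw [hwiw, one_mul]
      _ = wi * (w * a) := by rw [mul_assoc]
      _ = 0 := by rw [hwa, mul_zero]
    · simp [hlw]
  by_cases hid : ∃ u : A, u * u = u ∧ u ≠ 0 ∧ u ≠ 1
  · obtain ⟨e, hee, he0, he1⟩ := hid
    have hfe : (1 - e) * e = 0 := by rw [sub_mul, one_mul, hee, sub_self]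
    have hef : e * (1 - e) = 0 := by rw [mul_sub, mul_one, hee, sub_self]
    by_cases hmixex : ∃ y : A, lam (e * y * (1 - e)) ≠ 0 ∨ lam ((1 - e) * y * e) ≠ 0
    · obtain ⟨y, hy⟩ := hmixex
      rcases hy with hy | hy
      · refine Stmt8Aux.sq_zero_unit lam ?_ hy h1
        calc (e * y * (1 - e)) * (e * y * (1 - e))
            = e * y * (((1 - e) * e) * (y * (1 - e))) := by noncomm_ring
        _ = 0 := by rw [hfe, zero_mul, mul_zero]
      · refine Stmt8Aux.sq_zero_unit lam ?_ hy h1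
        calc ((1 - e) * y * e) * ((1 - e) * y * e)
            = (1 - e) * y * ((e * (1 - e)) * (y * e)) := by noncomm_ring
        _ = 0 := by rw [hef, zero_mul, mul_zero]
    · push_neg at hmixex
      by_cases heL : lam e = 0
      · exact Stmt8Aux.corner_case lam hc0 hc1 hfr1 hA h1 hee he0 (fun y => (hmixex y).1) heL
      by_cases hfL : lam (1 - e) = 0
      · have hff : (1 - e) * (1 - e) = 1 - e := by
          rw [sub_mul, one_mul, mul_sub, mul_one, hee]; abel
        have hf0 : (1 : A) - e ≠ 0 := sub_ne_zero.mpr (Ne.symm he1)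
        refine Stmt8Aux.corner_case lam hc0 hc1 hfr1 hA h1 hff hf0 ?_ hfL
        intro y
        have h2 : (1 : A) - (1 - e) = e := by abel
        rw [h2]
        exact (hmixex y).2
      · -- lam e ≠ 0 and lam (1-e) ≠ 0
        obtain ⟨_, wi, _, hprod1, hprod2⟩ :=
          Stmt8Aux.eunit_scaled (e := (1 : A)) (one_mul 1) hee (Stmt8Aux.mem_cor_one e)
            hfL (neg_ne_zero.mpr heL) (s := lam (1 - e)) (t := -(lam e))
        refine ⟨lam (1 - e) • e + (-(lam e)) • (1 - e), wi, hprod1, hprod2, ?_⟩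
        rw [map_add, map_smul, map_smul, smul_eq_mul, smul_eq_mul]
        ring
  · push_neg at hid
    by_contra hW
    push_neg at hW
    have tri : ∀ b : A, (∃ h : A, b * h = 1 ∧ h * b = 1) ∨ (∃ N, 0 < N ∧ b ^ N = 0) := by
      intro b
      rcases Stmt8Aux.trichotomy (one_mul (1 : A)) (Stmt8Aux.mem_cor_one b) hA with
        ⟨_, h, _, hh1, hh2⟩ | hnil | ⟨u, huu, _, hu0, hu1⟩
      · exact Or.inl ⟨h, hh1, hh2⟩
      · exact Or.inr hnil
      · exact absurd (hid u huu hu0) hu1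
    have nilLam : ∀ z : A, (∃ N, 0 < N ∧ z ^ N = 0) → lam z = 0 := by
      rintro z ⟨N, hN, hzN⟩
      by_contra hlz
      set z' : A := (lam 1 / lam z) • z with hz'
      have hz'N : z' ^ N = 0 := by rw [hz', smul_pow, hzN, smul_zero]
      obtain ⟨_, w', _, hww', hw'w⟩ :=
        Stmt8Aux.eunit_sub_nilpotent (k := k) (one_mul (1 : A)) (Stmt8Aux.mem_cor_one z') hN hz'N
      apply hW (1 - z') w' hww' hw'w
      rw [map_sub, hz', map_smul, smul_eq_mul, div_mul_cancel₀ _ hlz, sub_self]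
    obtain ⟨x, hx0, hlx⟩ : ∃ x : A, x ≠ 0 ∧ lam x = 0 := by
      by_contra hxk
      push_neg at hxk
      have hker : LinearMap.ker lam = ⊥ := by
        rw [Submodule.eq_bot_iff]
        intro a ha
        by_contra h
        exact hxk a h (LinearMap.mem_ker.mp ha)
      have hinj : Function.Injective lam := LinearMap.ker_eq_bot.mp hker
      have hle := LinearMap.finrank_le_finrank_of_injective hinj
      rw [Module.finrank_self] at hle
      omega
    obtain ⟨M, hM, hxM⟩ : ∃ N, 0 < N ∧ x ^ N = 0 := by
      rcases tri x with ⟨h, hh1, hh2⟩ | hnil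
      · exact absurd hlx (hW x h hh1 hh2)
      · exact hnil
    apply hx0
    apply hlam x
    intro y
    rcases tri (x * y) with ⟨h, hh1, hh2⟩ | hnil
    · exfalso
      have key : ∀ m : ℕ, x ^ m * (y * h) ^ m = 1 := by
        intro m
        induction m with
        | zero => simp
        | succ m ihm =>
          calc x ^ (m + 1) * (y * h) ^ (m + 1)
              = x ^ m * ((x * (y * h)) * (y * h) ^ m) := by
                rw [pow_succ, pow_succ']; noncomm_ring
          _ = x ^ m * (y * h) ^ m := by rw [← mul_assoc x y h, hh1, one_mul]
          _ = 1 := ihm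
      have hcontr := key M
      rw [hxM, zero_mul] at hcontr
      exact one_ne_zero hcontr.symm
    · exact nilLam _ hnil
end

section
/- Let k be a field, A a finite-dimensional unital associative k-algebra, and λ a Frobenius form on A such that λ(u) ≠ 0 for every unit u of A. Then A is a semisimple ring (its Jacobson radical is zero). -/
/-- If a module has finitely many coatomic submodules with trivial intersection,
it is semisimple. -/
lemma aux_semisimple_of_iInf_coatom_eq_bot {R M : Type*} [Ring R] [AddCommGroup M]
    [Module R M] {ι : Type*} [Finite ι] [DecidableEq ι] (m : ι → Submodule R M)
    (hm : ∀ i, IsCoatom (m i)) (h : ⨅ i, m i = ⊥) : IsSemisimpleModule R M := by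
  let f : M →ₗ[R] ∀ i, M ⧸ m i := LinearMap.pi fun i => (m i).mkQ
  have hker : LinearMap.ker f = ⊥ := by
    rw [LinearMap.ker_pi]
    simpa [Submodule.ker_mkQ] using h
  have hinj : Function.Injective f := LinearMap.ker_eq_bot.mp hker
  have hsimple : ∀ i, IsSimpleModule R (M ⧸ m i) := fun i =>
    isSimpleModule_iff_isCoatom.mpr (hm i)
  have hss : IsSemisimpleModule R (∀ i, M ⧸ m i) := by
    refine isSemisimpleModule_of_isSemisimpleModule_submodule'
      (p := fun i => LinearMap.range (LinearMap.single R (fun i => M ⧸ m i) i)) (fun i => ?_)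
      (LinearMap.iSup_range_single R _)
    exact IsSemisimpleModule.congr
      (LinearEquiv.ofInjective (LinearMap.single R (fun i => M ⧸ m i) i)
        (by simpa [LinearMap.coe_single] using Pi.single_injective (M := fun i => M ⧸ m i) i)).symm
  exact IsSemisimpleModule.congr
    ((LinearEquiv.ofInjective f hinj).trans (LinearEquiv.refl R _))

/-- Let `k` be a field, `A` a finite-dimensional unital associative
`k`-algebra, and `lam` a Frobenius form on `A` such that `lam u ≠ 0` for every unit
`u` of `A`. Then `A` is a semisimple ring (its Jacobson radical is zero). -/
theorem stmt9 (k : Type*) [Field k] (A : Type*) [Ring A] [Algebra k A]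
    [FiniteDimensional k A]
    (lam : A →ₗ[k] k) (hlam : IsFrobeniusForm lam)
    (hunit : ∀ u : Aˣ, lam ↑u ≠ 0) :
    IsSemisimpleRing A := by
  classical
  -- left inverses are two-sided in a finite-dimensional algebra
  have hu : ∀ x z : A, z * x = 1 → IsUnit x := by
    intro x z hzx
    have hinj : Function.Injective (LinearMap.mulLeft k x) := by
      intro a b hab
      have := congrArg (z * ·) hab
      simpa [LinearMap.mulLeft_apply, ← mul_assoc, hzx] using this
    obtain ⟨c, hc⟩ := (LinearMap.injective_iff_surjective.mp hinj) 1
    simp only [LinearMap.mulLeft_apply] at hc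
    -- x * c = 1 and z * x = 1 ⇒ unit
    have hzc : z = c := by
      calc z = z * (x * c) := by rw [hc, mul_one]
      _ = (z * x) * c := by rw [mul_assoc]
      _ = c := by rw [hzx, one_mul]
    exact ⟨⟨x, c, hc, hzc ▸ hzx⟩, rfl⟩
  have h1 : lam 1 ≠ 0 := by simpa using hunit 1
  -- lam vanishes on the Jacobson radical
  have hvan : ∀ y ∈ Ideal.jacobson (⊥ : Ideal A), lam y = 0 := by
    intro y hy
    by_contra hne
    set c : k := -(lam 1) / lam y with hc
    have hcy : c • y ∈ Ideal.jacobson (⊥ : Ideal A) := Submodule.smul_of_tower_mem _ c hy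
    obtain ⟨z, hz⟩ := Ideal.mem_jacobson_iff.mp hcy 1
    rw [Ideal.mem_bot, sub_eq_zero, mul_one] at hz
    have hz' : z * (c • y + 1) = 1 := by
      rw [mul_add, mul_one, hz]
    obtain ⟨u, huu⟩ := hu _ _ hz'
    apply hunit u
    rw [huu, map_add, map_smul, hc, smul_eq_mul, div_mul_cancel₀ _ hne]
    simp
  -- the Jacobson radical is trivial
  have hjac : Ideal.jacobson (⊥ : Ideal A) = ⊥ := by
    refine le_bot_iff.mp fun x hx => ?_
    rw [Submodule.mem_bot]
    refine hlam x fun b => ?_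
    exact hvan _ (Ideal.mul_mem_right b _ hx)
  -- Artinian: find finitely many maximal ideals with trivial intersection
  have : IsArtinianRing A := IsArtinianRing.of_finite k A
  let T : Set (Ideal A) :=
    {I | ∃ s : Finset (Ideal A), (∀ m ∈ s, m.IsMaximal) ∧ I = s.inf id}
  obtain ⟨N, ⟨s, hsmax, hNs⟩, hmin⟩ := IsArtinian.set_has_minimal T
    ⟨⊤, ∅, by simp, by simp⟩
  have hNle : ∀ m : Ideal A, m.IsMaximal → N ≤ m := by
    intro m hm
    by_contra hle
    have hmem : N ⊓ m ∈ T := by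
      refine ⟨insert m s, fun x hx => ?_, ?_⟩
      · rcases Finset.mem_insert.mp hx with rfl | hx
        · exact hm
        · exact hsmax x hx
      · rw [Finset.inf_insert, hNs, inf_comm]; rfl
    exact hmin _ hmem (lt_of_le_of_ne inf_le_left (fun h => hle (h ▸ inf_le_right)))
  have hNbot : N = ⊥ := by
    have h2 : N ≤ sInf {J : Ideal A | ⊥ ≤ J ∧ J.IsMaximal} :=
      le_sInf fun m hm => hNle m hm.2
    have h3 : N ≤ Ideal.jacobson (⊥ : Ideal A) := h2
    exact le_bot_iff.mp (hjac ▸ h3)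
  have hbot : ⨅ i : s, (i : Ideal A) = ⊥ := by
    rw [← hNbot, hNs]
    rw [Finset.inf_eq_iInf]
    simp [iInf_subtype]
  exact aux_semisimple_of_iInf_coatom_eq_bot (fun i : s => (i : Ideal A))
    (fun i => (hsmax i i.2).out) hbot
end

section
/- Let A be a finite-dimensional unital associative algebra over the two-element field F₂ = ZMod 2, and let λ be a Frobenius form on A such that λ(u) ≠ 0 for every unit u of A. Then there exists an odd natural number m and an F₂-algebra isomorphism A ≅ F₂^m, the product algebra Fin m → F₂ with pointwise operations. -/
section Stmt10Aux

variable {A : Type*} [Ring A] [Algebra (ZMod 2) A]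

lemma stmt10_two_eq_zero : (2 : A) = 0 := by
  have h : ((2 : ZMod 2) : ZMod 2) = 0 := by decide
  calc (2 : A) = algebraMap (ZMod 2) A 2 := by rw [map_ofNat]
    _ = 0 := by rw [show (2 : ZMod 2) = 0 by decide, map_zero]

lemma stmt10_add_self (x : A) : x + x = 0 := by
  rw [← two_mul, stmt10_two_eq_zero, zero_mul]

lemma stmt10_neg_eq (x : A) : -x = x := by
  exact neg_eq_of_add_eq_zero_left (stmt10_add_self x)

/-- The corner `eAe` as a submodule. -/
def stmt10_corner (e : A) : Submodule (ZMod 2) A where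
  carrier := {x | e * x = x ∧ x * e = x}
  add_mem' := by
    rintro x y ⟨hx1, hx2⟩ ⟨hy1, hy2⟩
    constructor <;> simp [mul_add, add_mul, hx1, hx2, hy1, hy2]
  zero_mem' := by simp
  smul_mem' := by
    rintro c x ⟨hx1, hx2⟩
    constructor
    · rw [mul_smul_comm, hx1]
    · rw [smul_mul_assoc, hx2]

/-- Primitivity of an idempotent. -/
def stmt10_Prim (e : A) : Prop :=
  ∀ f : A, f * f = f → e * f = f → f * e = f → f = 0 ∨ f = e

end Stmt10Aux

section Decomp
variable {A : Type*} [Ring A] [Algebra (ZMod 2) A] [FiniteDimensional (ZMod 2) A]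

lemma stmt10_decomp : ∀ (n : ℕ) (e : A), e * e = e →
    Module.finrank (ZMod 2) (stmt10_corner e) ≤ n →
    ∃ s : Finset A, (∑ x ∈ s, x) = e ∧
      (∀ x ∈ s, x * x = x ∧ x ≠ 0 ∧ stmt10_Prim x ∧ e * x = x ∧ x * e = x) ∧
      (∀ x ∈ s, ∀ y ∈ s, x ≠ y → x * y = 0) := by
  classical
  intro n
  induction n with
  | zero =>
    intro e he hrank
    rcases eq_or_ne e 0 with h0 | h0
    · exact ⟨∅, by simp [h0], by simp, by simp⟩
    · exfalso
      have hmem : e ∈ stmt10_corner e := ⟨he, he⟩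
      have hne : (⟨e, hmem⟩ : stmt10_corner e) ≠ 0 := by
        intro h; exact h0 (congrArg Subtype.val h)
      have hpos : 0 < Module.finrank (ZMod 2) (stmt10_corner e) :=
        Module.finrank_pos_iff_exists_ne_zero.mpr ⟨_, hne⟩
      omega
  | succ n ih =>
    intro e he hrank
    rcases eq_or_ne e 0 with h0 | h0
    · exact ⟨∅, by simp [h0], by simp, by simp⟩
    by_cases hprim : stmt10_Prim e
    · refine ⟨{e}, by simp, ?_, ?_⟩
      · intro x hx
        rw [Finset.mem_singleton] at hx
        subst hx
        exact ⟨he, h0, hprim, he, he⟩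
      · intro x hx y hy hxy
        rw [Finset.mem_singleton] at hx hy
        exact absurd (hx.trans hy.symm) hxy
    · rw [stmt10_Prim] at hprim
      push_neg at hprim
      obtain ⟨f, hf, hef, hfe, hf0, hfne⟩ := hprim
      set g := e + f with hg
      have hg2 : g * g = g := by
        have h1 : g * g = e * e + e * f + (f * e + f * f) := by rw [hg]; noncomm_ring
        rw [h1, he, hef, hfe, hf, hg, add_assoc, stmt10_add_self f, add_zero]
      have hfg : f * g = 0 := by
        rw [hg, mul_add, hfe, hf, stmt10_add_self]
      have hgf : g * f = 0 := by
        rw [hg, add_mul, hef, hf, stmt10_add_self]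
      have heg : e * g = g := by rw [hg, mul_add, he, hef]
      have hge : g * e = g := by rw [hg, add_mul, he, hfe]
      have hg0 : g ≠ 0 := by
        intro h
        apply hfne
        calc f = e + (e + f) := by rw [← add_assoc, stmt10_add_self, zero_add]
          _ = e := by rw [← hg, h, add_zero]
      have hltf : stmt10_corner f < stmt10_corner (A := A) e := by
        constructor
        · rintro x ⟨hx1, hx2⟩
          exact ⟨by rw [← hx1, ← mul_assoc, hef], by rw [← hx2, mul_assoc, hfe]⟩
        · intro hle
          have hm : e ∈ stmt10_corner f := hle ⟨he, he⟩
          exact hfne (hfe.symm.trans hm.1)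
      have hltg : stmt10_corner g < stmt10_corner (A := A) e := by
        constructor
        · rintro x ⟨hx1, hx2⟩
          exact ⟨by rw [← hx1, ← mul_assoc, heg], by rw [← hx2, mul_assoc, hge]⟩
        · intro hle
          have hm : e ∈ stmt10_corner g := hle ⟨he, he⟩
          have hge' : g = e := hge.symm.trans hm.1
          apply hf0
          calc f = e + (e + f) := by rw [← add_assoc, stmt10_add_self, zero_add]
            _ = e + g := by rw [hg]
            _ = 0 := by rw [hge', stmt10_add_self]
      have hrf : Module.finrank (ZMod 2) (stmt10_corner f) ≤ n := by
        have := Submodule.finrank_lt_finrank_of_lt hltf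
        omega
      have hrg : Module.finrank (ZMod 2) (stmt10_corner g) ≤ n := by
        have := Submodule.finrank_lt_finrank_of_lt hltg
        omega
      obtain ⟨s₁, hs₁sum, hs₁prop, hs₁orth⟩ := ih f hf hrf
      obtain ⟨s₂, hs₂sum, hs₂prop, hs₂orth⟩ := ih g hg2 hrg
      have hdisj : Disjoint s₁ s₂ := by
        rw [Finset.disjoint_left]
        intro x hx1 hx2
        have p1 := hs₁prop x hx1
        have p2 := hs₂prop x hx2
        apply p1.2.1
        calc x = f * x := p1.2.2.2.1.symm
          _ = f * (g * x) := by rw [p2.2.2.2.1]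
          _ = (f * g) * x := by rw [mul_assoc]
          _ = 0 := by rw [hfg, zero_mul]
      refine ⟨s₁ ∪ s₂, ?_, ?_, ?_⟩
      · rw [Finset.sum_union hdisj, hs₁sum, hs₂sum, hg, add_comm f (e + f),
          add_assoc, stmt10_add_self, add_zero]
      · intro x hx
        rcases Finset.mem_union.mp hx with h | h
        · obtain ⟨hxx, hx0, hxp, h1, h2⟩ := hs₁prop x h
          refine ⟨hxx, hx0, hxp, ?_, ?_⟩
          · rw [← h1, ← mul_assoc, hef]
          · rw [← h2, mul_assoc, hfe]
        · obtain ⟨hxx, hx0, hxp, h1, h2⟩ := hs₂prop x h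
          refine ⟨hxx, hx0, hxp, ?_, ?_⟩
          · rw [← h1, ← mul_assoc, heg]
          · rw [← h2, mul_assoc, hge]
      · intro x hx y hy hxy
        rcases Finset.mem_union.mp hx with h1 | h1 <;>
          rcases Finset.mem_union.mp hy with h2 | h2
        · exact hs₁orth x h1 y h2 hxy
        · have p1 := hs₁prop x h1
          have p2 := hs₂prop y h2
          calc x * y = (x * f) * (g * y) := by rw [p1.2.2.2.2, p2.2.2.2.1]
            _ = x * (f * g) * y := by noncomm_ring
            _ = 0 := by rw [hfg, mul_zero, zero_mul]
        · have p1 := hs₂prop x h1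
          have p2 := hs₁prop y h2
          calc x * y = (x * g) * (f * y) := by rw [p1.2.2.2.2, p2.2.2.2.1]
            _ = x * (g * f) * y := by noncomm_ring
            _ = 0 := by rw [hgf, mul_zero, zero_mul]
        · exact hs₂orth x h1 y h2 hxy

end Decomp

lemma stmt10_pow_idem {M : Type*} [Monoid M] [Finite M] (x : M) :
    ∃ n, 0 < n ∧ (x ^ n) * (x ^ n) = x ^ n := by
  obtain ⟨i, j, hij, h⟩ : ∃ i j, i < j ∧ x ^ i = x ^ j := by
    obtain ⟨i, j, hne, h⟩ := Finite.exists_ne_map_eq_of_infinite (fun n : ℕ => x ^ n)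
    rcases hne.lt_or_gt with h' | h'
    exacts [⟨i, j, h', h⟩, ⟨j, i, h', h.symm⟩]
  set p := j - i with hp
  have hp0 : 0 < p := by omega
  have hstep : ∀ k, i ≤ k → x ^ (k + p) = x ^ k := by
    intro k hk
    have h1 : x ^ (k + p) = x ^ (k - i) * x ^ (i + p) := by
      rw [← pow_add]; congr 1; omega
    rw [h1, show i + p = j by omega, ← h, ← pow_add, show k - i + i = k by omega]
  have hmany : ∀ t k, i ≤ k → x ^ (k + t * p) = x ^ k := by
    intro t
    induction t with
    | zero => simp
    | succ t iht =>
      intro k hk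
      have h2 : k + (t + 1) * p = (k + t * p) + p := by ring
      rw [h2, hstep _ (by omega), iht k hk]
  refine ⟨(i + 1) * p, by positivity, ?_⟩
  rw [← pow_add]
  exact hmany (i + 1) ((i + 1) * p) (by nlinarith)

section LamLemmas
variable {A : Type*} [Ring A] [Algebra (ZMod 2) A]
variable (lam : A →ₗ[ZMod 2] ZMod 2)

lemma stmt10_zmod2 : ∀ c : ZMod 2, c ≠ 0 → c = 1 := by decide

lemma stmt10_lam_one (hunit : ∀ u : Aˣ, lam ↑u ≠ 0) : lam 1 = 1 :=
  stmt10_zmod2 _ (hunit 1)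

lemma stmt10_lam_sq_zero (hunit : ∀ u : Aˣ, lam ↑u ≠ 0)
    (x : A) (hx : x * x = 0) : lam x = 0 := by
  have hinv : (1 + x) * (1 + x) = 1 := by
    have h1 : (1 + x) * (1 + x) = 1 + (x + x) + x * x := by noncomm_ring
    rw [h1, stmt10_add_self, hx, add_zero, add_zero]
  have hu : lam (1 + x) = 1 := stmt10_zmod2 _ (hunit ⟨1 + x, 1 + x, hinv, hinv⟩)
  have h2 : lam 1 + lam x = 1 := by rw [← map_add]; exact hu
  rw [stmt10_lam_one lam hunit] at h2
  exact add_left_cancel (a := (1 : ZMod 2)) (h2.trans (add_zero 1).symm)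

/-- If `v` is invertible in the corner ring `eAe` (with inverse `w`), then
`lam v = lam e`. -/
lemma stmt10_corner_unit_lam (hunit : ∀ u : Aˣ, lam ↑u ≠ 0)
    (e v w : A) (he : e * e = e)
    (hev : e * v = v) (hve : v * e = v) (hew : e * w = w) (hwe : w * e = w)
    (hvw : v * w = e) (hwv : w * v = e) : lam v = lam e := by
  have key : ∀ a b : A, e * a = a → a * e = a → e * b = b → b * e = b → a * b = e →
      (a + (1 + e)) * (b + (1 + e)) = 1 := by
    intro a b h1 h2 h3 h4 h5
    have expand : (a + (1 + e)) * (b + (1 + e)) =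
        a * b + (a * e + a) + (e * b + b) + ((e + e) + (e * e + 1)) := by noncomm_ring
    rw [expand, h2, h3, h5, stmt10_add_self a, stmt10_add_self b, stmt10_add_self e, he,
      add_zero, add_zero, zero_add, ← add_assoc, stmt10_add_self e, zero_add]
  have hu : lam (v + (1 + e)) = 1 :=
    stmt10_zmod2 _ (hunit ⟨v + (1 + e), w + (1 + e),
      key v w hev hve hew hwe hvw, key w v hew hwe hev hve hwv⟩)
  have he1 : lam (e + (1 + e)) = 1 := by
    rw [show e + (1 + e) = 1 + (e + e) by abel, stmt10_add_self e, add_zero]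
    exact stmt10_lam_one lam hunit
  have h1 : lam v + lam (1 + e) = 1 := by rw [← map_add]; exact hu
  have h2 : lam e + lam (1 + e) = 1 := by rw [← map_add]; exact he1
  exact add_right_cancel (h1.trans h2.symm)

/-- Nondegeneracy of `lam` restricted to the corner `eAe`. -/
lemma stmt10_corner_nondeg (hlam : ∀ a : A, (∀ b : A, lam (a * b) = 0) → a = 0)
    (hunit : ∀ u : Aˣ, lam ↑u ≠ 0)
    (e x : A) (he : e * e = e) (hex : e * x = x) (hxe : x * e = x)
    (h : ∀ b : A, e * b = b → b * e = b → lam (x * b) = 0) : x = 0 := by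
  apply hlam
  intro b
  have hsum : e * b * e + e * b * (1 + e) = e * b + e * b * (e + e) := by noncomm_ring
  rw [stmt10_add_self e, mul_zero, add_zero] at hsum
  have hsplit : x * b = x * (e * b * e) + x * (e * b * (1 + e)) := by
    rw [← mul_add, hsum, ← mul_assoc, hxe]
  have t1 : lam (x * (e * b * e)) = 0 := by
    refine h _ ?_ ?_
    · rw [show e * (e * b * e) = (e * e) * b * e by noncomm_ring, he]
    · rw [show (e * b * e) * e = e * b * (e * e) by noncomm_ring, he, mul_assoc]
  have t2 : lam (x * (e * b * (1 + e))) = 0 := by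
    apply stmt10_lam_sq_zero lam hunit
    have hz : (1 + e) * x = 0 := by
      rw [add_mul, one_mul, hex, stmt10_add_self]
    have hre : (x * (e * b * (1 + e))) * (x * (e * b * (1 + e))) =
        x * (e * b) * (((1 + e) * x) * (e * b * (1 + e))) := by noncomm_ring
    rw [hre, hz, zero_mul, mul_zero]
  rw [hsplit, map_add, t1, t2, add_zero]

omit [Algebra (ZMod 2) A] in
lemma stmt10_pow_corner (e z : A) (hez : e * z = z) (hze : z * e = z) :
    ∀ k, 0 < k → e * (z ^ k) = z ^ k ∧ (z ^ k) * e = z ^ k := by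
  intro k hk
  induction k with
  | zero => omega
  | succ t ih =>
    rcases Nat.eq_zero_or_pos t with ht | ht
    · subst ht; simpa using ⟨hez, hze⟩
    · obtain ⟨ih1, ih2⟩ := ih ht
      constructor
      · rw [pow_succ, ← mul_assoc, ih1]
      · rw [pow_succ, mul_assoc, hze]

lemma stmt10_pow_two_pow (e z : A) (he : e * e = e) (hez : e * z = z) (hze : z * e = z) :
    ∀ j : ℕ, (e + z) ^ (2 ^ j) = e + z ^ (2 ^ j) := by
  intro j
  induction j with
  | zero => simp
  | succ j ih =>
    have h2 : (2 : ℕ) ^ (j + 1) = 2 ^ j + 2 ^ j := by ring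
    rw [h2, pow_add, ih, pow_add]
    obtain ⟨hc1, hc2⟩ := stmt10_pow_corner e z hez hze (2 ^ j) (by positivity)
    have expand : (e + z ^ (2 ^ j)) * (e + z ^ (2 ^ j)) =
        e * e + (e * z ^ (2 ^ j) + z ^ (2 ^ j) * e) + z ^ (2 ^ j) * z ^ (2 ^ j) := by
      noncomm_ring
    rw [expand, he, hc1, hc2, stmt10_add_self (z ^ (2 ^ j)), add_zero]

/-- In the corner of a primitive idempotent, nilpotent elements vanish. -/
lemma stmt10_corner_nilp [Finite A]
    (hlam : ∀ a : A, (∀ b : A, lam (a * b) = 0) → a = 0)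
    (hunit : ∀ u : Aˣ, lam ↑u ≠ 0)
    (e x : A) (he : e * e = e) (he0 : e ≠ 0) (hprim : stmt10_Prim e)
    (hex : e * x = x) (hxe : x * e = x)
    (n : ℕ) (hn : 0 < n) (hxn : x ^ n = 0) : x = 0 := by
  apply stmt10_corner_nondeg lam hlam hunit e x he hex hxe
  intro b hb1 hb2
  have hey : e * (x * b) = x * b := by rw [← mul_assoc, hex]
  have hye : (x * b) * e = x * b := by rw [mul_assoc, hb2]
  obtain ⟨k, hk, hkid⟩ := stmt10_pow_idem (x * b)
  obtain ⟨hyk1, hyk2⟩ := stmt10_pow_corner e (x * b) hey hye k hk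
  rcases hprim _ hkid hyk1 hyk2 with hz | hz
  · -- (x*b)^k = 0 : e + x*b is a corner unit
    have hyj : (x * b) ^ (2 ^ k) = 0 := by
      have hsplit : (2 : ℕ) ^ k = k + (2 ^ k - k) := by
        have := @Nat.lt_two_pow_self k; omega
      rw [hsplit, pow_add, hz, zero_mul]
    have hEu : (e + x * b) ^ (2 ^ k) = e := by
      rw [stmt10_pow_two_pow e (x * b) he hey hye k, hyj, add_zero]
    have hpow1 : (2 : ℕ) ^ k = (2 ^ k - 1) + 1 := by
      have := Nat.one_le_two_pow (n := k); omega
    have hcorn : e * (e + x * b) = e + x * b := by rw [mul_add, he, hey]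
    have hcorn' : (e + x * b) * e = e + x * b := by rw [add_mul, he, hye]
    have h21 : 0 < 2 ^ k - 1 := by
      have h4 : (2 : ℕ) ^ 1 ≤ 2 ^ k := Nat.pow_le_pow_right (by norm_num) hk
      omega
    obtain ⟨hw1, hw2⟩ := stmt10_pow_corner e (e + x * b) hcorn hcorn' (2 ^ k - 1) h21
    have hvw : (e + x * b) * (e + x * b) ^ (2 ^ k - 1) = e := by
      rw [← pow_succ', ← hpow1, hEu]
    have hwv : (e + x * b) ^ (2 ^ k - 1) * (e + x * b) = e := by
      rw [← pow_succ, ← hpow1, hEu]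
    have hlam1 : lam (e + x * b) = lam e :=
      stmt10_corner_unit_lam lam hunit e (e + x * b) ((e + x * b) ^ (2 ^ k - 1)) he
        hcorn hcorn' hw1 hw2 hvw hwv
    have : lam e + lam (x * b) = lam e := by rw [← map_add]; exact hlam1
    exact add_left_cancel (this.trans (add_zero (lam e)).symm)
  · -- (x*b)^k = e : build inverse, contradiction with nilpotency unless x = 0
    set z := b * (x * b) ^ (k - 1) with hzdef
    have hxz : x * z = e := by
      rw [hzdef, ← mul_assoc, ← pow_succ', show k - 1 + 1 = k by omega, hz]
    have hez' : e * z = z := by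
      rw [hzdef, ← mul_assoc, hb1]
    have hze' : z * e = z := by
      rcases eq_or_ne k 1 with hk1 | hk1
      · rw [hzdef, hk1]; simpa using hb2
      · obtain ⟨_, hc2⟩ := stmt10_pow_corner e (x * b) hey hye (k - 1) (by omega)
        rw [hzdef, mul_assoc, hc2]
    have hd : (z * x) * (z * x) = z * x := by
      rw [show (z * x) * (z * x) = z * (x * z) * x by noncomm_ring, hxz, hze']
    have hed : e * (z * x) = z * x := by rw [← mul_assoc, hez']
    have hde : (z * x) * e = z * x := by rw [mul_assoc, hxe]
    rcases hprim _ hd hed hde with hd0 | hde'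
    · have hx0 : x = 0 := by
        calc x = e * x := hex.symm
          _ = (x * z) * x := by rw [hxz]
          _ = x * (z * x) := by rw [mul_assoc]
          _ = 0 := by rw [hd0, mul_zero]
      rw [hx0, zero_mul, map_zero]
    · exfalso
      have hpows : ∀ t, 0 < t → x ^ t * z ^ t = e := by
        intro t ht
        induction t with
        | zero => omega
        | succ t iht =>
          rcases Nat.eq_zero_or_pos t with ht0 | ht0
          · subst ht0; simpa using hxz
          · have hstep : x ^ (t + 1) * z ^ (t + 1) = x * (x ^ t * z ^ t) * z := by
              rw [pow_succ', pow_succ]; noncomm_ring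
            rw [hstep, iht ht0, hxe, hxz]
      have h0 := hpows n hn
      rw [hxn, zero_mul] at h0
      exact he0 h0.symm

/-- Nonzero elements of a primitive corner are invertible in the corner. -/
lemma stmt10_corner_inv [Finite A]
    (hlam : ∀ a : A, (∀ b : A, lam (a * b) = 0) → a = 0)
    (hunit : ∀ u : Aˣ, lam ↑u ≠ 0)
    (e x : A) (he : e * e = e) (he0 : e ≠ 0) (hprim : stmt10_Prim e)
    (hex : e * x = x) (hxe : x * e = x) (hx0 : x ≠ 0) :
    ∃ w : A, e * w = w ∧ w * e = w ∧ x * w = e ∧ w * x = e := by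
  obtain ⟨k, hk, hkid⟩ := stmt10_pow_idem x
  obtain ⟨hk1, hk2⟩ := stmt10_pow_corner e x hex hxe k hk
  rcases hprim _ hkid hk1 hk2 with hz | hz
  · exact absurd (stmt10_corner_nilp lam hlam hunit e x he he0 hprim hex hxe k hk hz) hx0
  · rcases eq_or_ne k 1 with hk1' | hk1'
    · have hxe' : x = e := by rw [← hz, hk1', pow_one]
      exact ⟨e, he, he, by rw [hxe', he], by rw [hxe', he]⟩
    · obtain ⟨hw1, hw2⟩ := stmt10_pow_corner e x hex hxe (k - 1) (by omega)
      refine ⟨x ^ (k - 1), hw1, hw2, ?_, ?_⟩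
      · rw [← pow_succ', show k - 1 + 1 = k by omega, hz]
      · rw [← pow_succ, show k - 1 + 1 = k by omega, hz]

/-- The corner of a primitive idempotent is `{0, e}` and `lam e = 1`. -/
lemma stmt10_corner_classify [Finite A]
    (hlam : ∀ a : A, (∀ b : A, lam (a * b) = 0) → a = 0)
    (hunit : ∀ u : Aˣ, lam ↑u ≠ 0)
    (e : A) (he : e * e = e) (he0 : e ≠ 0) (hprim : stmt10_Prim e) :
    lam e = 1 ∧ ∀ x : A, e * x = x → x * e = x → x = 0 ∨ x = e := by
  have hlamx : ∀ x : A, e * x = x → x * e = x → x ≠ 0 → lam x = lam e := by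
    intro x h1 h2 h3
    obtain ⟨w, hw1, hw2, hw3, hw4⟩ :=
      stmt10_corner_inv lam hlam hunit e x he he0 hprim h1 h2 h3
    exact stmt10_corner_unit_lam lam hunit e x w he h1 h2 hw1 hw2 hw3 hw4
  have hle : lam e = 1 := by
    by_contra hne
    have hle0 : lam e = 0 := by
      have : ∀ c : ZMod 2, c ≠ 1 → c = 0 := by decide
      exact this _ hne
    apply he0
    apply stmt10_corner_nondeg lam hlam hunit e e he he he
    intro b hb1 hb2
    rw [show e * b = b from hb1]
    rcases eq_or_ne b 0 with h | h
    · rw [h, map_zero]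
    · rw [hlamx b hb1 hb2 h, hle0]
  refine ⟨hle, ?_⟩
  intro x h1 h2
  by_contra hcon
  push_neg at hcon
  obtain ⟨hx0, hxe⟩ := hcon
  have l1 : lam x = 1 := (hlamx x h1 h2 hx0).trans hle
  have hxe' : x + e ≠ 0 := by
    intro h
    apply hxe
    calc x = x + (e + e) := by rw [stmt10_add_self, add_zero]
      _ = (x + e) + e := by rw [add_assoc]
      _ = e := by rw [h, zero_add]
  have hc1 : e * (x + e) = x + e := by rw [mul_add, h1, he]
  have hc2 : (x + e) * e = x + e := by rw [add_mul, h2, he]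
  have l2 : lam (x + e) = 1 := (hlamx _ hc1 hc2 hxe').trans hle
  rw [map_add, l1, hle] at l2
  exact absurd l2 (by decide)

/-- Cross terms between orthogonal idempotents pair to zero under `lam`. -/
lemma stmt10_cross_lam (hunit : ∀ u : Aˣ, lam ↑u ≠ 0)
    (e f y z : A) (hef : e * f = 0) (hfe : f * e = 0)
    (hy1 : e * y = y) (hy2 : y * f = y) (hz1 : f * z = z) (hz2 : z * e = z) :
    lam (y * z) = 0 := by
  have hysq : y * y = 0 := by
    rw [show y * y = (y * f) * (e * y) from by rw [hy2, hy1],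
      show (y * f) * (e * y) = y * (f * e) * y from by noncomm_ring, hfe, mul_zero, zero_mul]
  have hzsq : z * z = 0 := by
    rw [show z * z = (z * e) * (f * z) from by rw [hz2, hz1],
      show (z * e) * (f * z) = z * (e * f) * z from by noncomm_ring, hef, mul_zero, zero_mul]
  have hyu : (1 + y) * (1 + y) = 1 := by
    rw [show (1 + y) * (1 + y) = 1 + (y + y) + y * y from by noncomm_ring,
      stmt10_add_self, hysq, add_zero, add_zero]
  have hzu : (1 + z) * (1 + z) = 1 := by
    rw [show (1 + z) * (1 + z) = 1 + (z + z) + z * z from by noncomm_ring,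
      stmt10_add_self, hzsq, add_zero, add_zero]
  have hprod : ((1 + y) * (1 + z)) * ((1 + z) * (1 + y)) = 1 := by
    rw [show ((1 + y) * (1 + z)) * ((1 + z) * (1 + y)) =
      (1 + y) * ((1 + z) * (1 + z)) * (1 + y) from by noncomm_ring, hzu, mul_one, hyu]
  have hprod' : ((1 + z) * (1 + y)) * ((1 + y) * (1 + z)) = 1 := by
    rw [show ((1 + z) * (1 + y)) * ((1 + y) * (1 + z)) =
      (1 + z) * ((1 + y) * (1 + y)) * (1 + z) from by noncomm_ring, hyu, mul_one, hzu]
  have hu : lam ((1 + y) * (1 + z)) = 1 :=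
    stmt10_zmod2 _ (hunit ⟨(1 + y) * (1 + z), (1 + z) * (1 + y), hprod, hprod'⟩)
  have hexp : (1 + y) * (1 + z) = 1 + y + z + y * z := by noncomm_ring
  rw [hexp, map_add, map_add, map_add, stmt10_lam_one lam hunit,
    stmt10_lam_sq_zero lam hunit y hysq, stmt10_lam_sq_zero lam hunit z hzsq,
    add_zero, add_zero] at hu
  exact add_left_cancel (hu.trans (add_zero 1).symm)

end LamLemmas


/-- Let `A` be a finite-dimensional unital associative algebra over
`F₂ = ZMod 2`, and `lam` a Frobenius form on `A` such that `lam u ≠ 0` for every unit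
`u` of `A`. Then there is an odd natural number `m` and an `F₂`-algebra isomorphism
`A ≅ F₂^m` (the product algebra `Fin m → F₂` with pointwise operations). -/
theorem stmt10 (A : Type*) [Ring A] [Algebra (ZMod 2) A] [FiniteDimensional (ZMod 2) A]
    (lam : A →ₗ[ZMod 2] ZMod 2) (hlam : IsFrobeniusForm lam)
    (hunit : ∀ u : Aˣ, lam ↑u ≠ 0) :
    ∃ m : ℕ, Odd m ∧ Nonempty (A ≃ₐ[ZMod 2] (Fin m → ZMod 2)) := by
  classical
  rw [IsFrobeniusForm] at hlam
  haveI : Finite A := Module.finite_of_finite (ZMod 2)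
  -- primitive orthogonal idempotent decomposition of 1
  obtain ⟨s, hsum, hprop, horth⟩ :=
    stmt10_decomp (Module.finrank (ZMod 2) (stmt10_corner (1 : A))) 1 (one_mul 1) le_rfl
  -- sandwich lemma
  have hsand : ∀ x z c : A, z * x = 0 → lam (x * c * z) = 0 := by
    intro x z c hzx
    apply stmt10_lam_sq_zero lam hunit
    rw [show (x * c * z) * (x * c * z) = x * c * (z * x) * c * z from by noncomm_ring,
      hzx, mul_zero, zero_mul, zero_mul]
  -- cross terms vanish
  have hcross : ∀ x ∈ s, ∀ y ∈ s, x ≠ y → ∀ a : A, x * a * y = 0 := by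
    intro x hx y hy hxy a
    obtain ⟨hxx, hx0, hxp, -, -⟩ := hprop x hx
    obtain ⟨hyy, hy0, hyp, -, -⟩ := hprop y hy
    apply hlam
    intro b
    have hb : (x * a * y) * b = ∑ z ∈ s, (x * a * y) * (b * z) := by
      rw [← Finset.mul_sum, ← Finset.mul_sum, hsum, mul_one]
    rw [hb, map_sum]
    apply Finset.sum_eq_zero
    intro z hz
    rcases eq_or_ne z x with hzx | hzx
    · rw [hzx]
      have hrw : (x * a * y) * (b * x) = (x * a * y) * (y * (b * x)) := by
        rw [show (x * a * y) * (y * (b * x)) = (x * a * (y * y)) * (b * x) from by noncomm_ring,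
          hyy]
      rw [hrw]
      refine stmt10_cross_lam lam hunit x y _ _ (horth x hx y hy hxy) (horth y hy x hx (Ne.symm hxy))
        ?_ ?_ ?_ ?_
      · rw [show x * (x * a * y) = (x * x) * a * y from by noncomm_ring, hxx]
      · rw [show (x * a * y) * y = x * a * (y * y) from by noncomm_ring, hyy]
      · rw [show y * (y * (b * x)) = (y * y) * (b * x) from by noncomm_ring, hyy]
      · rw [show (y * (b * x)) * x = y * (b * (x * x)) from by noncomm_ring, hxx]
    · have hrw : (x * a * y) * (b * z) = x * (a * y * b) * z := by noncomm_ring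
      rw [hrw]
      exact hsand x z _ (horth z hz x hx hzx)
  -- centrality
  have hcent : ∀ x ∈ s, ∀ a : A, x * a = x * a * x ∧ a * x = x * a * x := by
    intro x hx a
    constructor
    · calc x * a = ∑ z ∈ s, x * a * z := by
            rw [show ∑ z ∈ s, x * a * z = x * a * ∑ z ∈ s, z from by rw [Finset.mul_sum],
              hsum, mul_one]
        _ = x * a * x := Finset.sum_eq_single x
            (fun z hz hzx => hcross x hx z hz (Ne.symm hzx) a) (fun h => absurd hx h)
    · calc a * x = ∑ z ∈ s, z * (a * x) := by rw [← Finset.sum_mul, hsum, one_mul]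
        _ = x * (a * x) := Finset.sum_eq_single x
            (fun z hz hzx => by rw [← mul_assoc]; exact hcross z hz x hx hzx a)
            (fun h => absurd hx h)
        _ = x * a * x := by rw [← mul_assoc]
  -- corner classification for each x ∈ s
  have hclass : ∀ x ∈ s, lam x = 1 ∧ ∀ c : A, x * c = c → c * x = c → c = 0 ∨ c = x := by
    intro x hx
    obtain ⟨hxx, hx0, hxp, -, -⟩ := hprop x hx
    exact stmt10_corner_classify lam hlam hunit x hxx hx0 hxp
  -- values x * a ∈ {0, x}
  have hval : ∀ x ∈ s, ∀ a : A, x * a = 0 ∨ x * a = x := by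
    intro x hx a
    obtain ⟨hxx, -, -, -, -⟩ := hprop x hx
    refine (hclass x hx).2 (x * a) ?_ ?_
    · rw [← mul_assoc, hxx]
    · rw [mul_assoc]
      have := (hcent x hx a).1
      rw [mul_assoc] at this
      exact this.symm
  set m := s.card with hm
  set E : Fin m → A := fun i => ((s.equivFin.symm i : s) : A) with hE
  have hEmem : ∀ i, E i ∈ s := fun i => (s.equivFin.symm i).2
  have hEinj : ∀ i j, i ≠ j → E i ≠ E j := by
    intro i j hij hEij
    exact hij (by simpa [hE, Subtype.ext_iff] using s.equivFin.symm.injective (Subtype.ext hEij))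
  have hEsum : ∑ i, E i = 1 := by
    rw [hE, ← hsum]
    rw [← Finset.sum_coe_sort s (fun x => (x : A))]
    exact Equiv.sum_comp s.equivFin.symm (fun x : s => (x : A))
  -- the ring homomorphism
  have hmul_key : ∀ (i : Fin m) (a b : A), E i * (a * b) = (E i * a) * (E i * b) := by
    intro i a b
    have h1 : (E i * a) * (E i * b) = (E i * a * E i) * b := by noncomm_ring
    rw [h1, ← (hcent (E i) (hEmem i) a).1, mul_assoc]
  have hlamE : ∀ i, lam (E i) = 1 := fun i => (hclass (E i) (hEmem i)).1
  let φ : A →+* (Fin m → ZMod 2) :=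
    { toFun := fun a i => lam (E i * a)
      map_one' := by
        funext i
        simp only [mul_one, Pi.one_apply]
        exact hlamE i
      map_mul' := by
        intro a b
        funext i
        simp only [Pi.mul_apply]
        rw [hmul_key i a b]
        rcases hval (E i) (hEmem i) a with h | h
        · rw [h, zero_mul, map_zero, zero_mul]
        · rw [h]
          obtain ⟨hxx, -, -, -, -⟩ := hprop (E i) (hEmem i)
          rw [show E i * (E i * b) = (E i * E i) * b from by noncomm_ring, hxx, hlamE i, one_mul]
      map_zero' := by funext i; simp
      map_add' := by intro a b; funext i; simp [mul_add] }
  have hφinj : Function.Injective φ := by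
    intro a b hab
    have hd : φ (a - b) = 0 := by rw [map_sub, hab, sub_self]
    have hz : ∀ i, E i * (a - b) = 0 := by
      intro i
      rcases hval (E i) (hEmem i) (a - b) with h | h
      · exact h
      · exfalso
        have : lam (E i * (a - b)) = 0 := congrFun hd i
        rw [h, hlamE i] at this
        exact one_ne_zero this
    have : a - b = 0 := by
      calc a - b = 1 * (a - b) := (one_mul _).symm
        _ = (∑ i, E i) * (a - b) := by rw [hEsum]
        _ = ∑ i, E i * (a - b) := by rw [Finset.sum_mul]
        _ = 0 := by simp [hz]
    exact sub_eq_zero.mp this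
  have hφsurj : Function.Surjective φ := by
    intro v
    refine ⟨∑ i, v i • E i, ?_⟩
    funext j
    show lam (E j * ∑ i, v i • E i) = v j
    rw [Finset.mul_sum, map_sum]
    have hterm : ∀ i : Fin m, lam (E j * (v i • E i)) = if i = j then v j else 0 := by
      intro i
      rw [mul_smul_comm, map_smul]
      rcases eq_or_ne i j with rfl | hij
      · obtain ⟨hxx, -, -, -, -⟩ := hprop (E i) (hEmem i)
        rw [hxx, hlamE i]
        simp
      · rw [horth (E j) (hEmem j) (E i) (hEmem i) (fun h => hEinj i j hij h.symm)]
        simp [hij]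
    rw [Finset.sum_congr rfl (fun i _ => hterm i)]
    simp
  let ψ : A ≃+* (Fin m → ZMod 2) := RingEquiv.ofBijective φ ⟨hφinj, hφsurj⟩
  have halg : ∀ r : ZMod 2, ψ (algebraMap (ZMod 2) A r) = algebraMap (ZMod 2) (Fin m → ZMod 2) r := by
    intro r
    rcases (by decide : ∀ c : ZMod 2, c = 0 ∨ c = 1) r with rfl | rfl
    · rw [map_zero, map_zero, map_zero]
    · rw [map_one, map_one, map_one]
  -- oddness
  have hoddcast : ((m : ℕ) : ZMod 2) = 1 := by
    have h1 : lam 1 = 1 := stmt10_lam_one lam hunit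
    have h2 : lam 1 = (m : ZMod 2) := by
      rw [← hEsum, map_sum]
      rw [Finset.sum_congr rfl (fun i _ => hlamE i)]
      simp [hm]
    rw [h2] at h1
    exact h1
  have hodd : Odd m := by
    rcases Nat.even_or_odd m with he | ho
    · exfalso
      obtain ⟨t, ht⟩ := he
      rw [ht] at hoddcast
      push_cast at hoddcast
      rw [show (t : ZMod 2) + t = 2 * t from by ring,
        show (2 : ZMod 2) = 0 from by decide, zero_mul] at hoddcast
      exact zero_ne_one hoddcast
    · exact ho
  exact ⟨m, hodd, ⟨AlgEquiv.ofRingEquiv halg⟩⟩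
end
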